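/- arXiv:1707.01224 — 3 statements merged into one kernel-verified Lean document; each statement's English description precedes it below -/
import Mathlib

section
/- Let T be a locally finite tree rooted at r, with initial fire B_r(k). If there is a containment strategy for the sequence (f_n), then there is a containment strategy of the form s(V') for some finite vertex set V', where s(V') protects in round n the f_n vertices of V' closest to the root that are neither burning nor protected. -/
open scoped ENNReal NNReal

namespace Firefight

variable {V : Type*}

/-- Vertices protected before round `n+1`'s spread: the strategy `s` plays `s n` in round `n+1`. -/
def protSet (s : ℕ → Set V) : ℕ → Set V
  | 0 => ∅
  | n + 1 => protSet s n ∪ s n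

/-- Burning vertices after `n` rounds. -/
def burnSet (G : SimpleGraph V) (X₀ : Set V) (s : ℕ → Set V) : ℕ → Set V
  | 0 => X₀
  | n + 1 => burnSet G X₀ s n ∪
      {v | v ∉ protSet s (n + 1) ∧ ∃ u ∈ burnSet G X₀ s n, G.Adj u v}

/-- A strategy is valid for the budget sequence `f` if in round `n+1` it protects at most
`f (n+1)` vertices, none of which is already burning. -/
def ValidStrategy (G : SimpleGraph V) (f : ℕ → ℕ) (X₀ : Set V) (s : ℕ → Set V) : Prop :=
  ∀ n, (s n).Finite ∧ (s n).ncard ≤ f (n + 1) ∧ Disjoint (s n) (burnSet G X₀ s n)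

/-- The fire is contained: only finitely many vertices ever burn. -/
def ContainsFire (G : SimpleGraph V) (X₀ : Set V) (s : ℕ → Set V) : Prop :=
  (⋃ n, burnSet G X₀ s n).Finite

/-- `G` satisfies `f_n`-containment. -/
def Containment (G : SimpleGraph V) (f : ℕ → ℕ) : Prop :=
  ∀ X₀ : Set V, X₀.Finite → ∃ s, ValidStrategy G f X₀ s ∧ ContainsFire G X₀ s

/-- Exponential containment of rate `lam`: `f_n`-containment for some `f_n = O(lam ^ n)`. -/
def ExpContainment (G : SimpleGraph V) (lam : ℝ≥0∞) : Prop :=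
  ∃ f : ℕ → ℕ, (∃ c : ℝ≥0, ∀ n, (f n : ℝ≥0∞) ≤ c * lam ^ n) ∧ Containment G f

/-- The critical exponential containment rate. -/
noncomputable def lambdaC (G : SimpleGraph V) : ℝ≥0∞ :=
  sInf {lam | ExpContainment G lam}

/-- A set of edges whose removal leaves the root `r` in a finite component. -/
def IsCutset (G : SimpleGraph V) (r : V) (Cut : Set (Sym2 V)) : Prop :=
  Cut ⊆ G.edgeSet ∧ {v | (G.deleteEdges Cut).Reachable r v}.Finite

/-- The distance `|e|` of an edge from the root: the distance to its farther endpoint. -/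
noncomputable def edgeDist (G : SimpleGraph V) (r : V) (e : Sym2 V) : ℕ :=
  Sym2.lift ⟨fun a b => max (G.dist r a) (G.dist r b), fun a b => max_comm _ _⟩ e

/-- `∑_{e ∈ Cut} lam ^ {-|e|}`. -/
noncomputable def cutsetWeight (G : SimpleGraph V) (r : V) (lam : ℝ≥0∞)
    (Cut : Set (Sym2 V)) : ℝ≥0∞ :=
  ∑' e : Cut, (lam ^ edgeDist G r (e : Sym2 V))⁻¹

/-- The branching number of a tree rooted at `r`. -/
noncomputable def branchingNumber (G : SimpleGraph V) (r : V) : ℝ≥0∞ :=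
  sSup {lam : ℝ≥0∞ | ∃ ε : ℝ≥0∞, 0 < ε ∧ ∀ Cut, IsCutset G r Cut → ε ≤ cutsetWeight G r lam Cut}

/-- The ball of radius `k` about `r`. -/
def ball (G : SimpleGraph V) (r : V) (k : ℕ) : Set V :=
  {v | G.dist r v ≤ k}

end Firefight

open Firefight

/-! ### Auxiliary development for statement 4 -/

namespace Firefight

open SimpleGraph

variable {V : Type*} {G : SimpleGraph V} {X₀ : Set V} {s : ℕ → Set V} {f : ℕ → ℕ} {r : V}
  {k : ℕ}

lemma protSet_mono (s : ℕ → Set V) : Monotone (protSet s) :=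
  monotone_nat_of_le_succ fun _ => Set.subset_union_left

lemma burnSet_mono (G : SimpleGraph V) (X₀ : Set V) (s : ℕ → Set V) :
    Monotone (burnSet G X₀ s) :=
  monotone_nat_of_le_succ fun _ => Set.subset_union_left

lemma mem_protSet {v : V} {n : ℕ} : v ∈ protSet s n ↔ ∃ m < n, v ∈ s m := by
  induction n with
  | zero => simp [protSet]
  | succ n ih =>
    simp only [protSet, Set.mem_union, ih]
    constructor
    · rintro (⟨m, hm, h⟩ | h)
      · exact ⟨m, by omega, h⟩
      · exact ⟨n, by omega, h⟩
    · rintro ⟨m, hm, h⟩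
      rcases Nat.lt_succ_iff_lt_or_eq.1 hm with h' | rfl
      · exact Or.inl ⟨m, h', h⟩
      · exact Or.inr h

lemma play_subset_protSet {n : ℕ} : s n ⊆ protSet s (n + 1) := Set.subset_union_right

lemma prot_not_burn (hs : ValidStrategy G f X₀ s) {v : V} {m : ℕ} (hv : v ∈ s m) (n : ℕ) :
    v ∉ burnSet G X₀ s n := by
  induction n with
  | zero =>
    intro hb
    exact Set.disjoint_left.1 (hs m).2.2 hv (burnSet_mono G X₀ s (Nat.zero_le m) hb)
  | succ n ih =>
    rintro (hb | hb)
    · exact ih hb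
    · by_cases hmn : m ≤ n
      · exact hb.1 (mem_protSet.2 ⟨m, by omega, hv⟩)
      · exact Set.disjoint_left.1 (hs m).2.2 hv
          (burnSet_mono G X₀ s (by omega : n + 1 ≤ m) (Set.mem_union_right _ hb))

lemma spread {u v : V} {n : ℕ} (hu : u ∈ burnSet G X₀ s n) (hadj : G.Adj u v)
    (hv : v ∉ protSet s (n + 1)) : v ∈ burnSet G X₀ s (n + 1) :=
  Set.mem_union_right _ ⟨hv, u, hu, hadj⟩

lemma not_prot_of_burn (hs : ValidStrategy G f X₀ s) {v : V} {m n : ℕ}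
    (hv : v ∈ burnSet G X₀ s n) : v ∉ protSet s m := fun hp => by
  obtain ⟨j, -, hj⟩ := mem_protSet.1 hp
  exact prot_not_burn hs hj n hv

lemma burn_speed (hconn : G.Connected) (r : V) (k : ℕ) :
    ∀ n, burnSet G (ball G r k) s n ⊆ ball G r (k + n) := by
  intro n
  induction n with
  | zero => exact fun v hv => hv
  | succ n ih =>
    rintro v (hv | ⟨-, u, hu, hadj⟩)
    · have : G.dist r v ≤ k + n := ih hv
      show G.dist r v ≤ k + (n + 1)
      omega
    · have h1 : G.dist r v ≤ G.dist r u + G.dist u v := hconn.dist_triangle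
      have h2 : G.dist u v = 1 := SimpleGraph.dist_eq_one_iff_adj.2 hadj
      have h3 : G.dist r u ≤ k + n := ih hu
      show G.dist r v ≤ k + (n + 1)
      omega

/-- The unique path between two vertices of a tree. -/
noncomputable def tpath (ht : G.IsTree) (x y : V) : G.Walk x y :=
  (ht.existsUnique_path x y).choose

lemma tpath_isPath (ht : G.IsTree) (x y : V) : (tpath ht x y).IsPath :=
  (ht.existsUnique_path x y).choose_spec.1

lemma tpath_eq (ht : G.IsTree) {x y : V} {p : G.Walk x y} (hp : p.IsPath) :
    p = tpath ht x y :=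
  (ht.existsUnique_path x y).choose_spec.2 p hp

lemma tpath_length (ht : G.IsTree) (x y : V) : (tpath ht x y).length = G.dist x y := by
  classical
  obtain ⟨p, hp⟩ := ht.isConnected.exists_walk_length_eq_dist x y
  have hb : p.bypass = tpath ht x y := tpath_eq ht (Walk.bypass_isPath p)
  have h1 : G.dist x y ≤ (tpath ht x y).length := dist_le _
  have h2 : (tpath ht x y).length ≤ p.length := hb ▸ Walk.length_bypass_le p
  omega

lemma tpath_takeUntil [DecidableEq V] (ht : G.IsTree) {x u : V}
    (hx : x ∈ (tpath ht r u).support) :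
    (tpath ht r u).takeUntil x hx = tpath ht r x :=
  tpath_eq ht ((tpath_isPath ht r u).takeUntil hx)

lemma dist_le_of_mem_tpath (ht : G.IsTree) {x u : V} (hx : x ∈ (tpath ht r u).support) :
    G.dist r x ≤ G.dist r u := by
  classical
  calc G.dist r x ≤ ((tpath ht r u).takeUntil x hx).length := dist_le _
    _ ≤ (tpath ht r u).length := Walk.length_takeUntil_le _ _
    _ = G.dist r u := tpath_length ht r u

lemma tpath_concat (ht : G.IsTree) {u₀ u : V} (hadj : G.Adj u₀ u)
    (hu : u ∉ (tpath ht r u₀).support) :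
    tpath ht r u = (tpath ht r u₀).concat hadj ∧ G.dist r u = G.dist r u₀ + 1 := by
  have hp : ((tpath ht r u₀).concat hadj).IsPath := by
    rw [← Walk.isPath_reverse_iff, Walk.reverse_concat]
    exact (Walk.cons_isPath_iff _ _).2
      ⟨(Walk.isPath_reverse_iff _).2 (tpath_isPath ht r u₀),
        by simpa [Walk.support_reverse] using hu⟩
  have he : tpath ht r u = (tpath ht r u₀).concat hadj := (tpath_eq ht hp).symm
  refine ⟨he, ?_⟩
  have hlen := congrArg Walk.length he
  rw [Walk.length_concat, tpath_length, tpath_length] at hlen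
  omega

lemma burn_path (ht : G.IsTree) (hs : ValidStrategy G f (ball G r k) s) :
    ∀ n, ∀ u ∈ burnSet G (ball G r k) s n, ∀ x ∈ (tpath ht r u).support,
      x ∈ burnSet G (ball G r k) s (G.dist r x - k) := by
  classical
  intro n
  induction n with
  | zero =>
    intro u hu x hx
    have hdx : G.dist r x ≤ k := (dist_le_of_mem_tpath ht hx).trans hu
    have h0 : G.dist r x - k = 0 := by omega
    rw [h0]
    exact hdx
  | succ n ih =>
    rintro u (hu | ⟨hunp, u₀, hu₀, hadj⟩) x hx
    · exact ih u hu x hx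
    · by_cases hmem : u ∈ (tpath ht r u₀).support
      · have hre : tpath ht r u = (tpath ht r u₀).takeUntil u hmem :=
          (tpath_takeUntil ht hmem).symm
        rw [hre] at hx
        exact ih u₀ hu₀ x (SimpleGraph.Walk.support_takeUntil_subset _ _ hx)
      · obtain ⟨hre, hdist⟩ := tpath_concat ht hadj hmem
        rw [hre, SimpleGraph.Walk.support_concat] at hx
        rw [List.mem_append] at hx
        rcases hx with hx' | hx'
        · exact ih u₀ hu₀ x hx'
        · have hxu : x = u := List.mem_singleton.1 hx'
          subst hxu
          have hb0 : u₀ ∈ burnSet G (ball G r k) s (G.dist r u₀ - k) :=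
            ih u₀ hu₀ u₀ (SimpleGraph.Walk.end_mem_support _)
          have huB : x ∈ burnSet G (ball G r k) s (n + 1) :=
            spread hu₀ hadj hunp
          have h1 : x ∈ burnSet G (ball G r k) s (G.dist r u₀ - k + 1) :=
            spread hb0 hadj (not_prot_of_burn hs huB)
          by_cases hxk : G.dist r x ≤ k
          · have h0 : G.dist r x - k = 0 := by omega
            rw [h0]
            exact hxk
          · have h0 : G.dist r x - k = G.dist r u₀ - k + 1 := by omega
            rw [h0]
            exact h1

lemma exists_greedy_finset [DecidableEq V] (key : V → ℕ) :
    ∀ (b : ℕ) (A : Finset V), ∃ S : Finset V, S ⊆ A ∧ S.card = min b A.card ∧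
      ∀ v ∈ S, ∀ w ∈ A \ S, key v ≤ key w := by
  intro b
  induction b with
  | zero => exact fun A => ⟨∅, by simp⟩
  | succ b ih =>
    intro A
    rcases A.eq_empty_or_nonempty with rfl | hA
    · exact ⟨∅, by simp⟩
    obtain ⟨v, hv, hmin⟩ := A.exists_min_image key hA
    obtain ⟨S, hSA, hcard, hkey⟩ := ih (A.erase v)
    have hvS : v ∉ S := fun h => (Finset.mem_erase.1 (hSA h)).1 rfl
    refine ⟨insert v S, ?_, ?_, ?_⟩
    · exact Finset.insert_subset hv (hSA.trans (Finset.erase_subset _ _))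
    · rw [Finset.card_insert_of_notMem hvS, hcard, Finset.card_erase_of_mem hv]
      have : 1 ≤ A.card := Finset.card_pos.2 hA
      omega
    · intro x hx w hw
      rw [Finset.mem_sdiff] at hw
      rcases Finset.mem_insert.1 hx with rfl | hx'
      · exact hmin w hw.1
      · refine hkey x hx' w (Finset.mem_sdiff.2 ⟨Finset.mem_erase.2 ⟨?_, hw.1⟩, ?_⟩)
        · rintro rfl; exact hw.2 (Finset.mem_insert_self _ _)
        · exact fun h => hw.2 (Finset.mem_insert_of_mem h)

lemma exists_pick (key : V → ℕ) (b : ℕ) (A : Set V) (hA : A.Finite) :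
    ∃ S : Set V, S ⊆ A ∧ S.Finite ∧ S.ncard = min b A.ncard ∧
      ∀ v ∈ S, ∀ w ∈ A \ S, key v ≤ key w := by
  classical
  obtain ⟨S, hSA, hcard, hkey⟩ := exists_greedy_finset key b hA.toFinset
  refine ⟨↑S, ?_, S.finite_toSet, ?_, ?_⟩
  · intro x hx
    exact hA.mem_toFinset.1 (hSA hx)
  · rw [Set.ncard_coe_finset, hcard, Set.ncard_eq_toFinset_card _ hA]
  · intro x hx w hw
    refine hkey x hx w (Finset.mem_sdiff.2 ⟨hA.mem_toFinset.2 hw.1, ?_⟩)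
    simpa using hw.2

open Classical in
/-- Greedily choose (up to) `b` vertices of `A` of minimal key. -/
noncomputable def pick (key : V → ℕ) (b : ℕ) (A : Set V) : Set V :=
  if h : A.Finite then (exists_pick key b A h).choose else ∅

lemma pick_spec (key : V → ℕ) (b : ℕ) {A : Set V} (hA : A.Finite) :
    pick key b A ⊆ A ∧ (pick key b A).Finite ∧ (pick key b A).ncard = min b A.ncard ∧
      ∀ v ∈ pick key b A, ∀ w ∈ A \ pick key b A, key v ≤ key w := by
  classical
  rw [pick]
  rw [dif_pos hA]
  exact (exists_pick key b A hA).choose_spec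

/-- The pair (burning set, protected set) of the greedy strategy on `W`. -/
noncomputable def gp (G : SimpleGraph V) (key : V → ℕ) (f : ℕ → ℕ) (X₀ : Set V)
    (W : Set V) : ℕ → Set V × Set V
  | 0 => (X₀, ∅)
  | n + 1 =>
    ((gp G key f X₀ W n).1 ∪
      {v | v ∉ (gp G key f X₀ W n).2 ∪
            pick key (f (n + 1)) (W \ ((gp G key f X₀ W n).1 ∪ (gp G key f X₀ W n).2)) ∧
          ∃ u ∈ (gp G key f X₀ W n).1, G.Adj u v},
     (gp G key f X₀ W n).2 ∪
       pick key (f (n + 1)) (W \ ((gp G key f X₀ W n).1 ∪ (gp G key f X₀ W n).2)))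

/-- The greedy strategy on `W`. -/
noncomputable def gstrat (G : SimpleGraph V) (key : V → ℕ) (f : ℕ → ℕ) (X₀ : Set V)
    (W : Set V) (n : ℕ) : Set V :=
  pick key (f (n + 1)) (W \ ((gp G key f X₀ W n).1 ∪ (gp G key f X₀ W n).2))

lemma gp_eq (G : SimpleGraph V) (key : V → ℕ) (f : ℕ → ℕ) (X₀ : Set V) (W : Set V) :
    ∀ n, burnSet G X₀ (gstrat G key f X₀ W) n = (gp G key f X₀ W n).1 ∧
      protSet (gstrat G key f X₀ W) n = (gp G key f X₀ W n).2 := by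
  intro n
  induction n with
  | zero => exact ⟨rfl, rfl⟩
  | succ n ih =>
    constructor
    · show burnSet G X₀ _ n ∪ _ = _
      rw [show protSet (gstrat G key f X₀ W) (n + 1)
            = protSet (gstrat G key f X₀ W) n ∪ gstrat G key f X₀ W n from rfl,
        ih.1, ih.2]
      rfl
    · show protSet (gstrat G key f X₀ W) n ∪ gstrat G key f X₀ W n = _
      rw [ih.2]
      rfl

end Firefight


/-- if the initial fire `B_r(k)` on a tree can be contained, then it can be
contained by a greedy strategy `s(V')` for some finite vertex set `V'`: in round `n+1` it
protects `min (f (n+1))` (number available) vertices of `V'` that are neither burning nor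
protected, choosing those closest to the root. -/
theorem stmt_4 {V : Type*} (T : SimpleGraph V) (hlf : T.LocallyFinite)
    (ht : T.IsTree) (r : V) (f : ℕ → ℕ) (k : ℕ)
    (h : ∃ s, ValidStrategy T f (ball T r k) s ∧ ContainsFire T (ball T r k) s) :
    ∃ (V' : Finset V) (s : ℕ → Set V),
      (∀ n, s n ⊆ (V' : Set V) \ (burnSet T (ball T r k) s n ∪ protSet s n) ∧
        (s n).ncard =
          min (f (n + 1)) (((V' : Set V) \ (burnSet T (ball T r k) s n ∪ protSet s n)).ncard) ∧
        ∀ v ∈ s n, ∀ w ∈ ((V' : Set V) \ (burnSet T (ball T r k) s n ∪ protSet s n)) \ s n,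
          T.dist r v ≤ T.dist r w) ∧
      ValidStrategy T f (ball T r k) s ∧ ContainsFire T (ball T r k) s := by
  classical
  obtain ⟨s, hs, hc⟩ := h
  have hB : (⋃ n, burnSet T (ball T r k) s n).Finite := hc
  have hsubB : ∀ n, burnSet T (ball T r k) s n ⊆ ⋃ n, burnSet T (ball T r k) s n :=
    fun n => Set.subset_iUnion _ n
  -- the boundary of the total burning set
  have hBdfin : {v | v ∉ (⋃ n, burnSet T (ball T r k) s n) ∧
      ∃ u ∈ ⋃ n, burnSet T (ball T r k) s n, T.Adj u v}.Finite := by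
    have hnb : ∀ u : V, (T.neighborSet u).Finite := fun u => by
      letI := hlf u
      exact (T.neighborSet u).toFinite
    refine (hB.biUnion fun u (_ : u ∈ ⋃ n, burnSet T (ball T r k) s n) => hnb u).subset ?_
    rintro v ⟨-, u, hu, hadj⟩
    exact Set.mem_biUnion hu hadj
  set Bd : Set V := {v | v ∉ (⋃ n, burnSet T (ball T r k) s n) ∧
      ∃ u ∈ ⋃ n, burnSet T (ball T r k) s n, T.Adj u v} with hBddef
  have mem_Bd : ∀ v, v ∈ Bd ↔ v ∉ (⋃ n, burnSet T (ball T r k) s n) ∧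
      ∃ u ∈ ⋃ n, burnSet T (ball T r k) s n, T.Adj u v := fun v => Iff.rfl
  set V' : Finset V := hBdfin.toFinset with hV'def
  have hV'coe : (V' : Set V) = Bd := hBdfin.coe_toFinset
  -- first burning time of a neighbour
  have hex : ∀ v ∈ Bd, ∃ n, ∃ u ∈ burnSet T (ball T r k) s n, T.Adj u v := by
    intro v hv
    obtain ⟨-, u, hu, hadj⟩ := (mem_Bd v).1 hv
    obtain ⟨m, hm⟩ := Set.mem_iUnion.1 hu
    exact ⟨m, u, hm, hadj⟩
  obtain ⟨τ, hτ⟩ : ∃ τ : V → ℕ, ∀ v ∈ Bd,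
      (∃ u ∈ burnSet T (ball T r k) s (τ v), T.Adj u v) ∧
      ∀ m, (∃ u ∈ burnSet T (ball T r k) s m, T.Adj u v) → τ v ≤ m := by
    refine ⟨fun v => if h : ∃ n, ∃ u ∈ burnSet T (ball T r k) s n, T.Adj u v
      then Nat.find h else 0, ?_⟩
    intro v hv
    have hx := hex v hv
    dsimp only
    rw [dif_pos hx]
    exact ⟨Nat.find_spec hx, fun m hm => Nat.find_min' hx hm⟩
  -- a boundary vertex must be protected by `s` by the time its neighbour burns
  have hF3 : ∀ v ∈ Bd, ∀ n, τ v ≤ n → v ∈ protSet s (n + 1) := by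
    intro v hv n hn
    obtain ⟨u, hu, hadj⟩ := (hτ v hv).1
    by_contra hp
    exact ((mem_Bd v).1 hv).1
      (hsubB (n + 1) (spread (burnSet_mono T _ s hn hu) hadj hp))
  -- the fire reaches a boundary vertex no later than its distance predicts
  have hL : ∀ v ∈ Bd, T.dist r v ≤ k + τ v + 1 := by
    intro v hv
    obtain ⟨u, hu, hadj⟩ := (hτ v hv).1
    have h1 : T.dist r u ≤ k + τ v := burn_speed ht.isConnected r k (τ v) hu
    have h2 : T.dist u v = 1 := SimpleGraph.dist_eq_one_iff_adj.2 hadj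
    have h3 : T.dist r v ≤ T.dist r u + T.dist u v := ht.isConnected.dist_triangle
    omega
  have hU : ∀ v ∈ Bd, τ v ≤ T.dist r v - (k + 1) := by
    intro v hv
    obtain ⟨hvB, u, hu, hadj⟩ := (mem_Bd v).1 hv
    obtain ⟨m, hm⟩ := Set.mem_iUnion.1 hu
    have hnot : v ∉ (tpath ht r u).support := by
      intro hmem
      exact hvB (hsubB _ (burn_path ht hs m u hm v hmem))
    obtain ⟨-, hdist⟩ := tpath_concat ht hadj hnot
    have hu' : u ∈ burnSet T (ball T r k) s (T.dist r u - k) :=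
      burn_path ht hs m u hm u (SimpleGraph.Walk.end_mem_support _)
    have hle := (hτ v hv).2 (T.dist r u - k) ⟨u, hu', hadj⟩
    omega
  -- cardinality bound for the protected set of `s`
  have hprotcard : ∀ n, (protSet s n).Finite ∧
      (protSet s n).ncard ≤ ∑ m ∈ Finset.range n, f (m + 1) := by
    intro n
    induction n with
    | zero => simp [protSet]
    | succ n ih =>
      refine ⟨ih.1.union (hs n).1, ?_⟩
      rw [Finset.sum_range_succ]
      calc (protSet s (n + 1)).ncard ≤ (protSet s n).ncard + (s n).ncard :=
            Set.ncard_union_le _ _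
        _ ≤ _ := add_le_add ih.2 (hs n).2.1
  -- the greedy strategy
  set g : ℕ → Set V := gstrat T (T.dist r) f (ball T r k) (V' : Set V) with hgdef
  have hgp := gp_eq T (T.dist r) f (ball T r k) (V' : Set V)
  have hgA : ∀ n, g n = pick (T.dist r) (f (n + 1))
      ((V' : Set V) \ (burnSet T (ball T r k) g n ∪ protSet g n)) := by
    intro n
    rw [hgdef, (hgp n).1, (hgp n).2]
    rfl
  have hAfin : ∀ n, ((V' : Set V) \ (burnSet T (ball T r k) g n ∪ protSet g n)).Finite :=
    fun n => V'.finite_toSet.subset Set.diff_subset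
  have hspec : ∀ n, g n ⊆ (V' : Set V) \ (burnSet T (ball T r k) g n ∪ protSet g n) ∧
      (g n).Finite ∧
      (g n).ncard = min (f (n + 1))
        (((V' : Set V) \ (burnSet T (ball T r k) g n ∪ protSet g n)).ncard) ∧
      ∀ v ∈ g n, ∀ w ∈ ((V' : Set V) \ (burnSet T (ball T r k) g n ∪ protSet g n)) \ g n,
        T.dist r v ≤ T.dist r w := by
    intro n
    have h1 := pick_spec (T.dist r) (f (n + 1)) (hAfin n)
    rwa [← hgA n] at h1
  have hgvalid : ValidStrategy T f (ball T r k) g := by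
    intro n
    obtain ⟨hsub, hfin, hcard, -⟩ := hspec n
    refine ⟨hfin, ?_, ?_⟩
    · rw [hcard]; exact min_le_left _ _
    · exact Set.disjoint_left.2 fun v hv hb => (hsub hv).2 (Or.inl hb)
  -- the main induction
  have main : ∀ n, burnSet T (ball T r k) g n ⊆ burnSet T (ball T r k) s n ∧
      ∀ v ∈ Bd, τ v < n → v ∈ protSet g n := by
    intro n
    induction n with
    | zero => exact ⟨subset_rfl, fun v _ hlt => absurd hlt (Nat.not_lt_zero _)⟩
    | succ n ih =>
      have hQ : ∀ v ∈ Bd, τ v < n + 1 → v ∈ protSet g (n + 1) := by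
        intro v hv hτv
        by_contra hvp
        -- `v` is available and unchosen at every round `m ≤ n`
        have hAv : ∀ m, m ≤ n →
            (v ∈ (V' : Set V) \ (burnSet T (ball T r k) g m ∪ protSet g m)) ∧ v ∉ g m := by
          intro m hm
          have hvb : v ∉ burnSet T (ball T r k) g m := fun hb =>
            ((mem_Bd v).1 hv).1 (hsubB n (ih.1 (burnSet_mono T _ g hm hb)))
          have hvpm : v ∉ protSet g m := fun hp =>
            hvp (protSet_mono g (by omega : m ≤ n + 1) hp)
          have hvgm : v ∉ g m := fun hgm =>
            hvp (protSet_mono g (by omega : m + 1 ≤ n + 1) (play_subset_protSet hgm))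
          refine ⟨⟨?_, ?_⟩, hvgm⟩
          · rw [hV'coe]; exact hv
          · rintro (h' | h')
            · exact hvb h'
            · exact hvpm h'
        -- greedy uses its full budget on closer vertices in every round `m ≤ n`
        have hfull : ∀ m, m ≤ n → (g m).ncard = f (m + 1) ∧
            ∀ w ∈ g m, T.dist r w ≤ T.dist r v := by
          intro m hm
          obtain ⟨hsub, hfin, hcard, hkey⟩ := hspec m
          obtain ⟨hvA, hvg⟩ := hAv m hm
          have hlt : f (m + 1) ≤
              ((V' : Set V) \ (burnSet T (ball T r k) g m ∪ protSet g m)).ncard := by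
            by_contra hle
            push_neg at hle
            have he1 : (g m).ncard =
                ((V' : Set V) \ (burnSet T (ball T r k) g m ∪ protSet g m)).ncard := by
              rw [hcard]; omega
            have he2 := Set.eq_of_subset_of_ncard_le hsub (le_of_eq he1.symm) (hAfin m)
            rw [← he2] at hvA
            exact hvg hvA
          exact ⟨by rw [hcard]; omega, fun w hw => hkey w hw v ⟨hvA, hvg⟩⟩
        -- cardinality of the greedy protected set
        have hgcard : ∀ j, j ≤ n + 1 → (protSet g j).Finite ∧
            (protSet g j).ncard = ∑ m ∈ Finset.range j, f (m + 1) := by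
          intro j
          induction j with
          | zero => intro _; simp [protSet]
          | succ j ihj =>
            intro hj
            obtain ⟨hfin, hcardj⟩ := ihj (by omega)
            obtain ⟨hsub, hgfin, -, -⟩ := hspec j
            have hdisj : Disjoint (protSet g j) (g j) :=
              Set.disjoint_right.2 fun w hw hp => (hsub hw).2 (Or.inr hp)
            refine ⟨hfin.union hgfin, ?_⟩
            show (protSet g j ∪ g j).ncard = _
            rw [Set.ncard_union_eq hdisj hfin hgfin, hcardj, (hfull j (by omega)).1,
              Finset.sum_range_succ]
        -- everything greedy protected (and `v`) needed protection by time `n` under `s`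
        have hincl : insert v (protSet g (n + 1)) ⊆ protSet s (n + 1) := by
          intro w hw
          rcases Set.mem_insert_iff.1 hw with rfl | hw'
          · exact hF3 w hv n (by omega)
          · obtain ⟨m, hm, hwg⟩ := mem_protSet.1 hw'
            have hwA := (hspec m).1 hwg
            have hwV : w ∈ (V' : Set V) := hwA.1
            rw [hV'coe] at hwV
            have hd : T.dist r w ≤ T.dist r v := (hfull m (by omega)).2 w hwg
            have h1 := hU w hwV
            have h2 := hL v hv
            exact hF3 w hwV n (by omega)
        obtain ⟨hgfin, hgcard'⟩ := hgcard (n + 1) le_rfl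
        have h1 : (insert v (protSet g (n + 1))).ncard = (protSet g (n + 1)).ncard + 1 :=
          Set.ncard_insert_of_notMem hvp hgfin
        have h2 : (insert v (protSet g (n + 1))).ncard ≤ (protSet s (n + 1)).ncard :=
          Set.ncard_le_ncard hincl (hprotcard (n + 1)).1
        have h3 := (hprotcard (n + 1)).2
        omega
      refine ⟨?_, hQ⟩
      rintro w (hw | ⟨hwnp, u, hu, hadj⟩)
      · exact burnSet_mono T _ s (Nat.le_succ n) (ih.1 hw)
      · have hus : u ∈ burnSet T (ball T r k) s n := ih.1 hu
        by_contra hws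
        have hwprot : w ∈ protSet s (n + 1) := by
          by_contra hp
          exact hws (spread hus hadj hp)
        have hwB : w ∉ ⋃ n, burnSet T (ball T r k) s n := by
          obtain ⟨m, -, hm⟩ := mem_protSet.1 hwprot
          intro hwB
          obtain ⟨j, hj⟩ := Set.mem_iUnion.1 hwB
          exact prot_not_burn hs hm j hj
        have hwBd : w ∈ Bd := (mem_Bd w).2 ⟨hwB, u, hsubB n hus, hadj⟩
        have hτw : τ w ≤ n := (hτ w hwBd).2 n ⟨u, hus, hadj⟩
        exact hwnp (hQ w hwBd (by omega))
  refine ⟨V', g, ?_, hgvalid, ?_⟩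
  · intro n
    obtain ⟨hsub, -, hcard, hkey⟩ := hspec n
    exact ⟨hsub, hcard, hkey⟩
  · exact hB.subset (Set.iUnion_subset fun n => ((main n).1).trans (hsubB n))
end

section
/- For a locally finite tree T rooted at r, the flow definition and the cutset definition of the branching number agree: sup{λ : there is a nonzero flow θ from r to infinity with θ(e) ≤ λ^{-|e|} for every edge e} = sup{λ : inf_Π Σ_{e∈Π} λ^{-|e|} > 0}, the infimum over cutsets Π separating r from infinity. -/
open scoped ENNReal NNReal

open Firefight

/-- A flow from `r` to infinity on a rooted tree, recorded by its values on parent edges: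
`θ v` is the flow through the parent edge of `v` (and `θ r` is the strength), so that the
flow into each vertex equals the total flow to its children. -/
def IsFlow {V : Type*} (G : SimpleGraph V) (r : V) (θ : V → ℝ≥0∞) : Prop :=
  ∀ v : V, θ v = ∑' w : {w : V // G.Adj v w ∧ G.dist r w = G.dist r v + 1}, θ (w : V)

namespace MFMC
open SimpleGraph
set_option linter.unusedSectionVars false


variable {V : Type*} [DecidableEq V] (T : SimpleGraph V) (r : V)

lemma dist_eq_zero_iff (ht : T.Connected) {v : V} : T.dist r v = 0 ↔ v = r := by
  rw [ht.dist_eq_zero_iff]; exact comm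

lemma dist_le_of_mem_support {u v x : V} (W : T.Walk u v) (hx : x ∈ W.support) :
    T.dist u x ≤ W.length :=
  le_trans (T.dist_le (W.takeUntil x hx)) (W.length_takeUntil_le hx)

lemma exists_parent (ht : T.Connected) {v : V} (hv : v ≠ r) :
    ∃ u, T.Adj u v ∧ T.dist r u + 1 = T.dist r v := by
  obtain ⟨W, hW⟩ := (ht r v).exists_walk_length_eq_dist
  have hd : 0 < T.dist r v := ht.pos_dist_of_ne (Ne.symm hv)
  obtain ⟨u, hadj, W', hW'⟩ := W.reverse.exists_eq_cons_of_ne hv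
  refine ⟨u, hadj.symm, ?_⟩
  have hlen : W'.length = T.dist r v - 1 := by
    have := congrArg SimpleGraph.Walk.length hW'
    simp only [Walk.length_reverse, Walk.length_cons, hW] at this
    omega
  have h1 : T.dist r u ≤ T.dist r v - 1 := by
    have := T.dist_le W'.reverse
    rwa [Walk.length_reverse, hlen] at this
  have h2 : T.dist r v ≤ T.dist r u + 1 := by
    have h3 := ht.dist_triangle (u := r) (v := u) (w := v)
    have hd1 : T.dist u v = 1 := dist_eq_one_iff_adj.2 hadj.symm
    omega
  omega

/-- The parent function. -/
noncomputable def par (v : V) : V := by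
  classical exact if h : ∃ u, T.Adj u v ∧ T.dist r u + 1 = T.dist r v then h.choose else r

lemma par_spec (ht : T.Connected) {v : V} (hv : v ≠ r) :
    T.Adj (par T r v) v ∧ T.dist r (par T r v) + 1 = T.dist r v := by
  have h := exists_parent T r ht hv
  rw [par]
  split
  · exact h.choose_spec
  · exact absurd h (by assumption)

lemma parent_unique (ht : T.IsTree) {v u₁ u₂ : V}
    (h₁ : T.Adj u₁ v ∧ T.dist r u₁ + 1 = T.dist r v)
    (h₂ : T.Adj u₂ v ∧ T.dist r u₂ + 1 = T.dist r v) : u₁ = u₂ := by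
  have hc := ht.isConnected
  obtain ⟨P₁, hP₁⟩ := (hc r u₁).exists_walk_length_eq_dist
  obtain ⟨P₂, hP₂⟩ := (hc r u₂).exists_walk_length_eq_dist
  have hp₁ : P₁.IsPath := P₁.isPath_of_length_eq_dist hP₁
  have hp₂ : P₂.IsPath := P₂.isPath_of_length_eq_dist hP₂
  have hv₁ : v ∉ P₁.support := fun hx => by
    have := dist_le_of_mem_support T P₁ hx; omega
  have hv₂ : v ∉ P₂.support := fun hx => by
    have := dist_le_of_mem_support T P₂ hx; omega
  have hW₁ : (P₁.concat h₁.1).IsPath := by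
    rw [← Walk.isPath_reverse_iff, Walk.reverse_concat, Walk.cons_isPath_iff]
    exact ⟨hp₁.reverse, by rwa [Walk.support_reverse, List.mem_reverse]⟩
  have hW₂ : (P₂.concat h₂.1).IsPath := by
    rw [← Walk.isPath_reverse_iff, Walk.reverse_concat, Walk.cons_isPath_iff]
    exact ⟨hp₂.reverse, by rwa [Walk.support_reverse, List.mem_reverse]⟩
  obtain ⟨W, hW, hWu⟩ := ht.existsUnique_path r v
  obtain ⟨hv', -⟩ := SimpleGraph.Walk.concat_inj ((hWu _ hW₁).trans (hWu _ hW₂).symm)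
  exact hv'

lemma par_eq (ht : T.IsTree) {v u : V} (hadj : T.Adj u v)
    (hd : T.dist r u + 1 = T.dist r v) : par T r v = u := by
  have hv : v ≠ r := fun h => by
    rw [h, (dist_eq_zero_iff T r ht.isConnected).2 rfl] at hd; omega
  exact parent_unique T r ht (par_spec T r ht.isConnected hv) ⟨hadj, hd⟩


lemma chSet_finite (hlf : T.LocallyFinite) (v : V) :
    {w | T.Adj v w ∧ T.dist r w = T.dist r v + 1}.Finite := by
  have : (T.neighborSet v).Finite := by haveI := hlf v; exact Set.toFinite _
  exact this.subset fun w hw => hw.1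

/-- The children of `v`, as a `Finset`. -/
noncomputable def ch (hlf : T.LocallyFinite) (v : V) : Finset V :=
  (chSet_finite T r hlf v).toFinset

lemma mem_ch {hlf : T.LocallyFinite} {v w : V} :
    w ∈ ch T r hlf v ↔ T.Adj v w ∧ T.dist r w = T.dist r v + 1 := by
  simp [ch]

lemma mem_ch_iff_par (ht : T.IsTree) {hlf : T.LocallyFinite} {v w : V} :
    w ∈ ch T r hlf v ↔ w ≠ r ∧ par T r w = v := by
  rw [mem_ch]
  constructor
  · rintro ⟨hadj, hd⟩
    have hw : w ≠ r := fun h => by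
      rw [h, (dist_eq_zero_iff T r ht.isConnected).2 rfl] at hd; omega
    exact ⟨hw, par_eq T r ht hadj (by omega)⟩
  · rintro ⟨hw, hp⟩
    obtain ⟨hadj, hd⟩ := par_spec T r ht.isConnected hw
    rw [hp] at hadj hd
    exact ⟨hadj, by omega⟩

/-- `u` is a descendant of `v` (or equal). -/
def desc (v u : V) : Prop :=
  ∃ j : ℕ, (par T r)^[j] u = v ∧ T.dist r u = T.dist r v + j

lemma desc_refl (v : V) : desc T r v v := ⟨0, rfl, by omega⟩

lemma desc_ne_root {v u : V} (h : desc T r v u) (huv : u ≠ v) : u ≠ r := by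
  obtain ⟨j, hj, hd⟩ := h
  rcases Nat.eq_zero_or_pos j with h0 | h0
  · subst h0; exact absurd hj huv
  · intro h; rw [h, SimpleGraph.dist_self] at hd; omega

lemma desc_of_desc_par (ht : T.IsTree) {v u : V} (hu : u ≠ r)
    (h : desc T r v (par T r u)) : desc T r v u := by
  obtain ⟨j, hj, hd⟩ := h
  obtain ⟨-, hd'⟩ := par_spec T r ht.isConnected hu
  exact ⟨j + 1, by rw [Function.iterate_succ_apply, hj], by omega⟩

lemma desc_trans (ht : T.IsTree) {v w u : V} (h₁ : desc T r v w) (h₂ : desc T r w u) :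
    desc T r v u := by
  obtain ⟨j₁, hj₁, hd₁⟩ := h₁
  obtain ⟨j₂, hj₂, hd₂⟩ := h₂
  exact ⟨j₁ + j₂, by rw [Function.iterate_add_apply, hj₂, hj₁], by omega⟩

lemma desc_of_mem_ch (ht : T.IsTree) {hlf : T.LocallyFinite} {v w : V}
    (h : w ∈ ch T r hlf v) : desc T r v w := by
  obtain ⟨hw, hp⟩ := (mem_ch_iff_par T r ht).1 h
  have hd := ((mem_ch T r).1 h).2
  exact ⟨1, by rw [Function.iterate_one]; exact hp, by omega⟩

lemma desc_unique_of_dist_eq (ht : T.IsTree) {v₁ v₂ u : V} (h₁ : desc T r v₁ u)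
    (h₂ : desc T r v₂ u) (hd : T.dist r v₁ = T.dist r v₂) : v₁ = v₂ := by
  obtain ⟨j₁, hj₁, hd₁⟩ := h₁
  obtain ⟨j₂, hj₂, hd₂⟩ := h₂
  have : j₁ = j₂ := by omega
  rw [← hj₁, ← hj₂, this]

lemma desc_exists_child (ht : T.IsTree) {hlf : T.LocallyFinite} {v u : V}
    (h : desc T r v u) (hlt : T.dist r v < T.dist r u) :
    ∃ w ∈ ch T r hlf v, desc T r w u := by
  obtain ⟨j, hj, hd⟩ := h
  revert hlt
  induction j generalizing u with
  | zero => omega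
  | succ k ih =>
    intro hlt
    have hu : u ≠ r := by
      intro h; rw [h, SimpleGraph.dist_self] at hd; omega
    obtain ⟨hadj, hdp⟩ := par_spec T r ht.isConnected hu
    rcases Nat.eq_zero_or_pos k with h0 | h0
    · subst h0
      rw [Function.iterate_succ_apply', Function.iterate_zero_apply] at hj
      refine ⟨u, ?_, desc_refl T r u⟩
      rw [mem_ch]
      rw [hj] at hadj hdp
      exact ⟨hadj, by omega⟩
    · have hj' : (par T r)^[k] (par T r u) = v := by
        rwa [← Function.iterate_succ_apply]
      have hd' : T.dist r (par T r u) = T.dist r v + k := by omega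
      obtain ⟨w, hw, hdesc⟩ := ih hj' hd' (by omega)
      exact ⟨w, hw, desc_of_desc_par T r ht hu hdesc⟩

lemma desc_root (ht : T.IsTree) (u : V) : desc T r r u := by
  generalize hn : T.dist r u = n
  induction n generalizing u with
  | zero =>
    rw [dist_eq_zero_iff T r ht.isConnected] at hn
    rw [hn]; exact desc_refl T r r
  | succ k ih =>
    have hu : u ≠ r := fun h => by
      rw [h, SimpleGraph.dist_self] at hn; omega
    obtain ⟨-, hdp⟩ := par_spec T r ht.isConnected hu
    exact desc_of_desc_par T r ht hu (ih _ (by omega))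

lemma dist_le_of_desc {v u : V} (h : desc T r v u) : T.dist r v ≤ T.dist r u := by
  obtain ⟨j, -, hd⟩ := h; omega

lemma ball_finite (ht : T.Connected) (hlf : T.LocallyFinite) (k : ℕ) :
    {v | T.dist r v ≤ k}.Finite := by
  induction k with
  | zero =>
    refine Set.Finite.subset (Set.finite_singleton r) fun v hv => ?_
    simp only [Set.mem_setOf_eq, Nat.le_zero] at hv
    exact (dist_eq_zero_iff T r ht).1 hv
  | succ k ih =>
    have : {v | T.dist r v ≤ k + 1} ⊆
        {v | T.dist r v ≤ k} ∪ ⋃ x ∈ {v | T.dist r v ≤ k}, T.neighborSet x := by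
      intro v hv
      simp only [Set.mem_setOf_eq] at hv
      rcases Nat.lt_or_ge (T.dist r v) (k + 1) with h | h
      · exact Or.inl (by simpa using Nat.lt_succ_iff.1 h)
      · have hv' : v ≠ r := fun hh => by
          rw [hh, (dist_eq_zero_iff T r ht).2 rfl] at h; omega
        obtain ⟨hadj, hdp⟩ := par_spec T r ht hv'
        refine Or.inr ?_
        refine Set.mem_biUnion (show par T r v ∈ {v | T.dist r v ≤ k} by
          simp only [Set.mem_setOf_eq]; omega) hadj
    refine Set.Finite.subset (ih.union (ih.biUnion fun x _ => by
      haveI := hlf x; exact Set.toFinite _)) this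


lemma ne_endpoints_of_desc (ht : T.IsTree) {a u : V} (ha : a ≠ r) (hd : desc T r a u)
    (hau : u ≠ a) : u ≠ a ∧ u ≠ par T r a := by
  obtain ⟨j, hj, hdist⟩ := hd
  obtain ⟨-, hpa⟩ := par_spec T r ht.isConnected ha
  have hj0 : j ≠ 0 := fun h => by subst h; exact hau hj
  exact ⟨hau, fun h => by rw [h] at hdist; omega⟩

lemma reachable_deleteEdges_of_desc (ht : T.IsTree) {a u : V} (ha : a ≠ r)
    (hd : desc T r a u) : (T.deleteEdges {s(par T r a, a)}).Reachable a u := by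
  obtain ⟨j, hj, hdist⟩ := hd
  induction j generalizing u with
  | zero => rw [← hj]; rfl
  | succ k ih =>
    have hu : u ≠ r := fun h => by rw [h, SimpleGraph.dist_self] at hdist; omega
    obtain ⟨hadj, hdp⟩ := par_spec T r ht.isConnected hu
    obtain ⟨-, hpa⟩ := par_spec T r ht.isConnected ha
    have hr1 : (T.deleteEdges {s(par T r a, a)}).Reachable a (par T r u) :=
      ih (u := par T r u) (by rwa [← Function.iterate_succ_apply]) (by omega)
    refine hr1.trans (SimpleGraph.Adj.reachable ?_)
    rw [SimpleGraph.deleteEdges_adj]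
    refine ⟨hadj, ?_⟩
    simp only [Set.mem_singleton_iff]
    intro h
    have hmem : u ∈ s(par T r a, a) := by rw [← h]; simp
    rw [Sym2.mem_iff] at hmem
    rcases hmem with h' | h' <;> rw [h'] at hdist <;> omega

lemma not_reachable_of_desc (ht : T.IsTree) {E : Set (Sym2 V)} {a u : V} (ha : a ≠ r)
    (hd : desc T r a u) (hE : s(par T r a, a) ∈ E) :
    ¬ (T.deleteEdges E).Reachable r u := by
  intro h
  obtain ⟨hadj, hpa⟩ := par_spec T r ht.isConnected ha
  set e : Sym2 V := s(par T r a, a) with he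
  have h1 : (T.deleteEdges {e}).Reachable r u :=
    h.mono (SimpleGraph.deleteEdges_anti (Set.singleton_subset_iff.2 hE))
  have h2 : (T.deleteEdges {e}).Reachable r (par T r a) := by
    obtain ⟨W, hW⟩ := (ht.isConnected r (par T r a)).exists_walk_length_eq_dist
    have hne : ∀ ed ∈ W.edges, ed ∉ ({e} : Set (Sym2 V)) := by
      intro ed hed hmem
      rw [Set.mem_singleton_iff] at hmem
      subst hmem
      have hsup : a ∈ W.support := W.snd_mem_support_of_mem_edges hed
      have := dist_le_of_mem_support T W hsup
      omega
    exact ⟨W.toDeleteEdges {e} hne⟩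
  have h3 : (T.deleteEdges {e}).Reachable a u := reachable_deleteEdges_of_desc T r ht ha hd
  have hbridge : T.IsBridge e :=
    (isAcyclic_iff_forall_edge_isBridge.mp ht.IsAcyclic) (T.mem_edgeSet.2 hadj)
  rw [he, isBridge_iff] at hbridge
  exact hbridge (h2.symm.trans (h1.trans h3.symm))

lemma reach_parent (ht : T.IsTree) {E : Set (Sym2 V)} {v : V} (hv : v ≠ r)
    (h : (T.deleteEdges E).Reachable r v) :
    (T.deleteEdges E).Reachable r (par T r v) ∧ s(par T r v, v) ∉ E := by
  have hE : s(par T r v, v) ∉ E := fun hE =>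
    not_reachable_of_desc T r ht hv (desc_refl T r v) hE h
  obtain ⟨hadj, -⟩ := par_spec T r ht.isConnected hv
  refine ⟨h.trans (SimpleGraph.Adj.reachable ?_), hE⟩
  rw [SimpleGraph.deleteEdges_adj]
  exact ⟨hadj.symm, by rwa [Sym2.eq_swap]⟩

open scoped Classical in
/-- The max-flow value of the subtree below `v`, truncated `k` levels down. -/
noncomputable def Cfun (hlf : T.LocallyFinite) (lam : ℝ≥0∞) : ℕ → V → ℝ≥0∞
  | 0, v => (lam ^ T.dist r v)⁻¹
  | (k+1), v => min ((lam ^ T.dist r v)⁻¹) (∑ w ∈ ch T r hlf v, Cfun hlf lam k w)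

open scoped Classical in
/-- An (approximately) minimal cut below `v`, truncated `k` levels down, recorded by the
child-endpoints of its edges. -/
noncomputable def Scut (hlf : T.LocallyFinite) (lam : ℝ≥0∞) : ℕ → V → Finset V
  | 0, v => {v}
  | (k+1), v =>
      if (lam ^ T.dist r v)⁻¹ ≤ ∑ w ∈ ch T r hlf v, Cfun T r hlf lam k w then {v}
      else (ch T r hlf v).biUnion (fun w => Scut hlf lam k w)

lemma Cfun_le (hlf : T.LocallyFinite) (lam : ℝ≥0∞) (k : ℕ) (v : V) :
    Cfun T r hlf lam k v ≤ (lam ^ T.dist r v)⁻¹ := by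
  cases k with
  | zero => exact le_of_eq rfl
  | succ k => exact min_le_left _ _

lemma Scut_desc (ht : T.IsTree) (hlf : T.LocallyFinite) (lam : ℝ≥0∞) :
    ∀ (k : ℕ) (v u : V), u ∈ Scut T r hlf lam k v → desc T r v u := by
  intro k
  induction k with
  | zero =>
    intro v u hu
    rw [Scut, Finset.mem_singleton] at hu
    rw [hu]; exact desc_refl T r v
  | succ k ih =>
    intro v u hu
    rw [Scut] at hu
    split at hu
    · rw [Finset.mem_singleton] at hu; rw [hu]; exact desc_refl T r v
    · rw [Finset.mem_biUnion] at hu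
      obtain ⟨w, hw, hu⟩ := hu
      exact desc_trans T r ht (desc_of_mem_ch T r ht hw) (ih w u hu)

lemma Scut_pairwiseDisjoint (ht : T.IsTree) (hlf : T.LocallyFinite) (lam : ℝ≥0∞) (k : ℕ)
    (v : V) : (↑(ch T r hlf v) : Set V).PairwiseDisjoint (Scut T r hlf lam k) := by
  intro w₁ hw₁ w₂ hw₂ hne
  simp only [Function.onFun, Finset.disjoint_left]
  intro u hu₁ hu₂
  refine hne ?_
  refine desc_unique_of_dist_eq T r ht (Scut_desc T r ht hlf lam k w₁ u hu₁)
    (Scut_desc T r ht hlf lam k w₂ u hu₂) ?_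
  rw [(mem_ch T r).1 hw₁ |>.2, (mem_ch T r).1 hw₂ |>.2]

lemma Scut_sum_le (ht : T.IsTree) (hlf : T.LocallyFinite) (lam : ℝ≥0∞) :
    ∀ (k : ℕ) (v : V),
      ∑ u ∈ Scut T r hlf lam k v, (lam ^ T.dist r u)⁻¹ ≤ Cfun T r hlf lam k v := by
  intro k
  induction k with
  | zero => intro v; rw [Scut, Cfun, Finset.sum_singleton]
  | succ k ih =>
    intro v
    rw [Scut, Cfun]
    split
    · rw [Finset.sum_singleton]
      exact le_min le_rfl (by assumption)
    · refine le_trans (le_of_eq (Finset.sum_biUnion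
        (Scut_pairwiseDisjoint T r ht hlf lam k v))) ?_
      exact le_min (le_of_not_ge (by assumption) |>.trans' (Finset.sum_le_sum fun w _ => ih w))
        (Finset.sum_le_sum fun w _ => ih w)

lemma Scut_cover (ht : T.IsTree) (hlf : T.LocallyFinite) (lam : ℝ≥0∞) :
    ∀ (k : ℕ) (v u : V), desc T r v u → T.dist r v + k ≤ T.dist r u →
      ∃ a ∈ Scut T r hlf lam k v, desc T r a u := by
  intro k
  induction k with
  | zero =>
    intro v u hd _
    exact ⟨v, by rw [Scut]; exact Finset.mem_singleton_self v, hd⟩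
  | succ k ih =>
    intro v u hd hk
    rw [Scut]
    split
    · exact ⟨v, Finset.mem_singleton_self v, hd⟩
    · obtain ⟨w, hw, hdw⟩ := desc_exists_child T r ht (hlf := hlf) hd (by omega)
      have hdw' : T.dist r w = T.dist r v + 1 := ((mem_ch T r).1 hw).2
      obtain ⟨a, ha, hda⟩ := ih w u hdw (by omega)
      exact ⟨a, Finset.mem_biUnion.2 ⟨w, hw, ha⟩, hda⟩

lemma parEdge_injOn (ht : T.IsTree) {s : Finset V} (hs : ∀ a ∈ s, a ≠ r) :
    Set.InjOn (fun a => s(par T r a, a)) ↑s := by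
  intro a₁ h₁ a₂ h₂ he
  obtain ⟨-, hd₁⟩ := par_spec T r ht.isConnected (hs a₁ h₁)
  obtain ⟨-, hd₂⟩ := par_spec T r ht.isConnected (hs a₂ h₂)
  rw [Sym2.eq_iff] at he
  rcases he with ⟨-, h⟩ | ⟨h, h'⟩
  · exact h
  · exfalso; rw [h] at hd₁; rw [← h'] at hd₂; omega

lemma edgeDist_mk (x y : V) :
    edgeDist T r s(x, y) = max (T.dist r x) (T.dist r y) := by
  simp [edgeDist]

lemma edgeDist_parEdge (ht : T.IsTree) {a : V} (ha : a ≠ r) :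
    edgeDist T r s(par T r a, a) = T.dist r a := by
  obtain ⟨-, hd⟩ := par_spec T r ht.isConnected ha
  rw [edgeDist_mk]
  omega

lemma cut_bound (ht : T.IsTree) (hlf : T.LocallyFinite) {lam ε : ℝ≥0∞}
    (hc : ∀ Cut, IsCutset T r Cut → ε ≤ cutsetWeight T r lam Cut) (k : ℕ) :
    ε ≤ ∑ w ∈ ch T r hlf r, Cfun T r hlf lam k w := by
  classical
  set B := (ch T r hlf r).biUnion (Scut T r hlf lam k) with hB
  have hBprop : ∀ a ∈ B, a ≠ r := by
    intro a ha
    rw [hB, Finset.mem_biUnion] at ha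
    obtain ⟨w, hw, ha⟩ := ha
    have h1 := dist_le_of_desc T r (Scut_desc T r ht hlf lam k w a ha)
    have h2 := ((mem_ch T r).1 hw).2
    rw [(dist_eq_zero_iff T r ht.isConnected).2 rfl] at h2
    intro h; rw [h, SimpleGraph.dist_self] at h1; omega
  set Pi := B.image (fun a => s(par T r a, a)) with hPi
  have hcut : IsCutset T r ↑Pi := by
    constructor
    · intro e he
      rw [hPi, Finset.coe_image, Set.mem_image] at he
      obtain ⟨a, ha, rfl⟩ := he
      exact T.mem_edgeSet.2 (par_spec T r ht.isConnected (hBprop a (by exact_mod_cast ha))).1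
    · refine Set.Finite.subset (ball_finite T r ht.isConnected hlf k) ?_
      intro v hv
      simp only [Set.mem_setOf_eq] at hv ⊢
      by_contra hgt
      push_neg at hgt
      obtain ⟨w, hw, hdw⟩ := desc_exists_child T r ht (hlf := hlf) (desc_root T r ht v)
        (by rw [(dist_eq_zero_iff T r ht.isConnected).2 rfl]; omega)
      have hdw1 : T.dist r w = 1 := by
        have := ((mem_ch T r).1 hw).2
        rwa [(dist_eq_zero_iff T r ht.isConnected).2 rfl] at this
      obtain ⟨a, ha, hda⟩ := Scut_cover T r ht hlf lam k w v hdw (by omega)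
      have haB : a ∈ B := Finset.mem_biUnion.2 ⟨w, hw, ha⟩
      refine not_reachable_of_desc T r ht (hBprop a haB) hda ?_ hv
      rw [hPi]
      exact_mod_cast Finset.mem_coe.2 (Finset.mem_image_of_mem _ haB)
  have h1 : ε ≤ cutsetWeight T r lam ↑Pi := hc _ hcut
  rw [cutsetWeight] at h1
  have h2 : ∑' (e : (↑Pi : Set (Sym2 V))), (lam ^ edgeDist T r (e : Sym2 V))⁻¹
      = ∑ e ∈ Pi, (lam ^ edgeDist T r e)⁻¹ :=
    Finset.tsum_subtype' Pi (fun e => (lam ^ edgeDist T r e)⁻¹)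
  rw [h2] at h1
  rw [hPi, Finset.sum_image (parEdge_injOn T r ht hBprop)] at h1
  have h3 : ∑ a ∈ B, (lam ^ edgeDist T r s(par T r a, a))⁻¹
      = ∑ a ∈ B, (lam ^ T.dist r a)⁻¹ :=
    Finset.sum_congr rfl fun a ha => by rw [edgeDist_parEdge T r ht (hBprop a ha)]
  rw [h3, hB, Finset.sum_biUnion (Scut_pairwiseDisjoint T r ht hlf lam k r)] at h1
  exact h1.trans (Finset.sum_le_sum fun w _ => Scut_sum_le T r ht hlf lam k w)

lemma sum_map_toList {M : Type*} [AddCommMonoid M] (s : Finset V) (f : V → M) :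
    (s.toList.map f).sum = ∑ a ∈ s, f a := by
  rw [← Multiset.sum_coe, ← Multiset.map_coe, Finset.coe_toList]
  rfl

/-- Greedily split an amount `m` among a list of recipients with capacities `cap`. -/
noncomputable def distrib (cap : V → ℝ≥0∞) : List V → ℝ≥0∞ → V → ℝ≥0∞
  | [], _, _ => 0
  | w :: l, m, x => if x = w then min m (cap w) else distrib cap l (m - min m (cap w)) x

lemma distrib_le_cap (cap : V → ℝ≥0∞) :
    ∀ (l : List V) (m : ℝ≥0∞) (x : V), distrib cap l m x ≤ cap x := by
  intro l
  induction l with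
  | nil => intro m x; exact zero_le
  | cons w l ih =>
    intro m x
    rw [distrib]
    split
    · rename_i h; rw [h]; exact min_le_right _ _
    · exact ih _ x

lemma distrib_sum (cap : V → ℝ≥0∞) :
    ∀ (l : List V) (m : ℝ≥0∞), l.Nodup → m ≤ (l.map cap).sum →
      (l.map (distrib cap l m)).sum = m := by
  intro l
  induction l with
  | nil =>
    intro m _ hm
    simp only [List.map_nil, List.sum_nil] at hm ⊢
    exact (le_zero_iff.1 hm).symm
  | cons w l ih =>
    intro m hnd hm
    rw [List.map_cons, List.sum_cons]
    obtain ⟨hw, hnd'⟩ := List.nodup_cons.1 hnd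
    have hhead : distrib cap (w :: l) m w = min m (cap w) := by rw [distrib, if_pos rfl]
    have htail : ∀ x ∈ l, distrib cap (w :: l) m x
        = distrib cap l (m - min m (cap w)) x := by
      intro x hx
      have hxw : x ≠ w := fun h => hw (h ▸ hx)
      rw [distrib, if_neg hxw]
    rw [hhead, List.map_congr_left htail]
    rw [List.map_cons, List.sum_cons] at hm
    have hle : m - min m (cap w) ≤ (l.map cap).sum := by
      rcases le_total (cap w) m with hc | hc
      · rw [min_eq_right hc, tsub_le_iff_right]
        rwa [add_comm] at hm
      · rw [min_eq_left hc, tsub_self]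
        exact zero_le
    rw [ih _ hnd' hle]
    exact add_tsub_cancel_of_le (min_le_left _ _)

/-- Depth-dependent capacities for the ball of radius `n`. -/
noncomputable def capF (hlf : T.LocallyFinite) (lam : ℝ≥0∞) (n : ℕ) : V → ℝ≥0∞ :=
  fun w => Cfun T r hlf lam (n - T.dist r w) w

/-- The max flow in the ball of radius `n`, built level by level. -/
noncomputable def Theta (hlf : T.LocallyFinite) (lam : ℝ≥0∞) (n : ℕ) : ℕ → V → ℝ≥0∞
  | 0, v => if v = r then ∑ w ∈ ch T r hlf r, Cfun T r hlf lam (n-1) w else 0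
  | (j+1), v =>
      if T.dist r v = j + 1 ∧ j + 1 ≤ n then
        distrib (capF T r hlf lam n) (ch T r hlf (par T r v)).toList
          (Theta hlf lam n j (par T r v)) v
      else if T.dist r v = j + 1 then 0 else Theta hlf lam n j v

/-- The max flow in the ball of radius `n`. -/
noncomputable def thetaN (hlf : T.LocallyFinite) (lam : ℝ≥0∞) (n : ℕ) : V → ℝ≥0∞ :=
  fun v => Theta T r hlf lam n (T.dist r v) v

lemma theta_stable (hlf : T.LocallyFinite) (lam : ℝ≥0∞) (n : ℕ) :
    ∀ (j : ℕ) (v : V), T.dist r v ≤ j →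
      Theta T r hlf lam n j v = thetaN T r hlf lam n v := by
  intro j
  induction j with
  | zero =>
    intro v hv
    rw [thetaN, Nat.le_zero.1 hv]
  | succ j ih =>
    intro v hv
    rcases Nat.lt_or_ge (T.dist r v) (j + 1) with h | h
    · rw [Theta, if_neg (fun hh => by omega), if_neg (by omega)]
      exact ih v (by omega)
    · rw [thetaN]
      have : T.dist r v = j + 1 := by omega
      rw [this]

lemma theta_root (hlf : T.LocallyFinite) (lam : ℝ≥0∞) (n : ℕ) :
    thetaN T r hlf lam n r = ∑ w ∈ ch T r hlf r, Cfun T r hlf lam (n-1) w := by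
  rw [thetaN, SimpleGraph.dist_self, Theta, if_pos rfl]

lemma theta_cap (hlf : T.LocallyFinite) (lam : ℝ≥0∞) (n : ℕ) {v : V} (hv : v ≠ r)
    (ht : T.Connected) : thetaN T r hlf lam n v ≤ capF T r hlf lam n v := by
  have hd : 0 < T.dist r v := ht.pos_dist_of_ne (Ne.symm hv)
  obtain ⟨j, hj⟩ : ∃ j, T.dist r v = j + 1 := ⟨T.dist r v - 1, by omega⟩
  rw [thetaN, hj, Theta]
  split
  · exact distrib_le_cap _ _ _ _
  · exact zero_le

lemma theta_cons (htt : T.IsTree) (hlf : T.LocallyFinite) (lam : ℝ≥0∞) (n : ℕ) (v : V)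
    (hv : T.dist r v < n) :
    thetaN T r hlf lam n v = ∑ w ∈ ch T r hlf v, thetaN T r hlf lam n w := by
  have hterm : ∀ w ∈ ch T r hlf v, thetaN T r hlf lam n w
      = distrib (capF T r hlf lam n) (ch T r hlf v).toList (thetaN T r hlf lam n v) w := by
    intro w hw
    obtain ⟨hadj, hdw⟩ := (mem_ch T r).1 hw
    have hpar : par T r w = v := ((mem_ch_iff_par T r htt).1 hw).2
    rw [thetaN, hdw, Theta, if_pos ⟨hdw, by omega⟩, hpar,
      theta_stable T r hlf lam n (T.dist r v) v le_rfl]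
  rw [Finset.sum_congr rfl hterm, ← sum_map_toList]
  have hcapw : ∀ w ∈ ch T r hlf v, capF T r hlf lam n w
      = Cfun T r hlf lam (n - T.dist r v - 1) w := by
    intro w hw
    rw [capF, ((mem_ch T r).1 hw).2]
    congr 1
  have hbound : thetaN T r hlf lam n v ≤ ((ch T r hlf v).toList.map (capF T r hlf lam n)).sum := by
    rw [sum_map_toList]
    by_cases hvr : v = r
    · rw [hvr] at hcapw ⊢
      rw [theta_root T r hlf lam n]
      refine le_of_eq (Finset.sum_congr rfl fun w hw => ?_)
      rw [hcapw w hw]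
      congr 1
      rw [SimpleGraph.dist_self]
      omega
    · refine (theta_cap T r hlf lam n hvr htt.isConnected).trans ?_
      rw [capF]
      obtain ⟨m, hm⟩ : ∃ m, n - T.dist r v = m + 1 := ⟨n - T.dist r v - 1, by omega⟩
      rw [hm, Cfun]
      refine (min_le_right _ _).trans (le_of_eq (Finset.sum_congr rfl fun w hw => ?_))
      rw [hcapw w hw]
      congr 1
      omega
  rw [distrib_sum _ _ _ (Finset.nodup_toList _) hbound]

lemma tsum_children (hlf : T.LocallyFinite) (θ : V → ℝ≥0∞) (v : V) :
    ∑' w : {w : V // T.Adj v w ∧ T.dist r w = T.dist r v + 1}, θ (w : V)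
      = ∑ w ∈ ch T r hlf v, θ w := by
  classical
  have h1 : ∑' w : ({w | T.Adj v w ∧ T.dist r w = T.dist r v + 1} : Set V), θ (w : V)
      = ∑' w, ({w | T.Adj v w ∧ T.dist r w = T.dist r v + 1} : Set V).indicator θ w :=
    tsum_subtype _ _
  rw [show (∑' w : {w : V // T.Adj v w ∧ T.dist r w = T.dist r v + 1}, θ (w : V)) =
    ∑' w : ({w | T.Adj v w ∧ T.dist r w = T.dist r v + 1} : Set V), θ (w : V) from rfl, h1,
    tsum_eq_sum (s := ch T r hlf v) (f := ({w | T.Adj v w ∧ T.dist r w = T.dist r v + 1} :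
      Set V).indicator θ) ?_]
  · refine Finset.sum_congr rfl fun w hw => ?_
    rw [Set.indicator_of_mem]
    exact (mem_ch T r).1 hw
  · intro w hw
    rw [Set.indicator_of_notMem]
    intro hmem
    exact hw ((mem_ch T r).2 hmem)

/-- The outer edge-boundary of a finite vertex set, recorded by child endpoints. -/
noncomputable def bdF (hlf : T.LocallyFinite) (K : Finset V) : Finset V := by
  classical exact (K.biUnion (ch T r hlf)) \ K

lemma mem_bdF (ht : T.IsTree) {hlf : T.LocallyFinite} {K : Finset V} {w : V} :
    w ∈ bdF T r hlf K ↔ w ∉ K ∧ w ≠ r ∧ par T r w ∈ K := by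
  classical
  rw [bdF]
  constructor
  · intro h
    rw [Finset.mem_sdiff, Finset.mem_biUnion] at h
    obtain ⟨⟨v, hv, hw⟩, hnK⟩ := h
    obtain ⟨hwr, hpar⟩ := (mem_ch_iff_par T r ht).1 hw
    exact ⟨hnK, hwr, hpar ▸ hv⟩
  · rintro ⟨hnK, hwr, hpar⟩
    rw [Finset.mem_sdiff, Finset.mem_biUnion]
    exact ⟨⟨par T r w, hpar, (mem_ch_iff_par T r ht).2 ⟨hwr, rfl⟩⟩, hnK⟩

lemma flow_le_bd (ht : T.IsTree) (hlf : T.LocallyFinite) (θ : V → ℝ≥0∞)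
    (hθ : ∀ v, θ v = ∑ w ∈ ch T r hlf v, θ w) :
    ∀ (K : Finset V), r ∈ K → (∀ v ∈ K, v ≠ r → par T r v ∈ K) →
      θ r ≤ ∑ w ∈ bdF T r hlf K, θ w := by
  classical
  suffices H : ∀ (m : ℕ) (K : Finset V), K.card = m → r ∈ K →
      (∀ v ∈ K, v ≠ r → par T r v ∈ K) → θ r ≤ ∑ w ∈ bdF T r hlf K, θ w by
    intro K; exact H K.card K rfl
  intro m
  induction m using Nat.strong_induction_on with
  | _ m ih =>
    intro K hcard hrK hclosed
    by_cases hK : K = {r}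
    · subst hK
      have hbd : bdF T r hlf {r} = ch T r hlf r := by
        ext w
        rw [mem_bdF T r ht, Finset.mem_singleton, mem_ch_iff_par T r ht, Finset.mem_singleton]
        constructor
        · rintro ⟨-, h1, h2⟩; exact ⟨h1, h2⟩
        · rintro ⟨h1, h2⟩; exact ⟨h1, h1, h2⟩
      rw [hbd, ← hθ r]
    · have hlt : 1 < K.card := by
        rcases Nat.lt_or_ge 1 K.card with h | h
        · exact h
        · exfalso
          apply hK
          have h1 : K.card = 1 := le_antisymm h (Finset.card_pos.2 ⟨r, hrK⟩)
          obtain ⟨y, hy⟩ := Finset.card_eq_one.1 h1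
          rw [hy] at hrK ⊢
          rw [Finset.mem_singleton] at hrK
          rw [hrK]
      have hne : (K.erase r).Nonempty := by
        obtain ⟨x, hx, hxr⟩ := Finset.exists_mem_ne hlt r
        exact ⟨x, Finset.mem_erase.2 ⟨hxr, hx⟩⟩
      obtain ⟨v, hvmem, hvmax⟩ := Finset.exists_max_image (K.erase r) (T.dist r) hne
      obtain ⟨hvr, hvK⟩ := Finset.mem_erase.1 hvmem
      obtain ⟨hadjv, hdv⟩ := par_spec T r ht.isConnected hvr
      have hchK : ∀ u ∈ ch T r hlf v, u ∉ K := by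
        intro u hu huK
        obtain ⟨hur, -⟩ := (mem_ch_iff_par T r ht).1 hu
        have hm1 := hvmax u (Finset.mem_erase.2 ⟨hur, huK⟩)
        have hm2 := ((mem_ch T r).1 hu).2
        omega
      set K' := K.erase v with hK'
      have hrK' : r ∈ K' := Finset.mem_erase.2 ⟨Ne.symm hvr, hrK⟩
      have hclosed' : ∀ u ∈ K', u ≠ r → par T r u ∈ K' := by
        intro u huK' hur
        obtain ⟨huv, huK⟩ := Finset.mem_erase.1 huK'
        refine Finset.mem_erase.2 ⟨?_, hclosed u huK hur⟩
        intro h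
        exact hchK u ((mem_ch_iff_par T r ht).2 ⟨hur, h⟩) huK
      have hcard' : K'.card < m := by
        rw [hK', Finset.card_erase_of_mem hvK]
        omega
      have hIH := ih K'.card hcard' K' rfl hrK' hclosed'
      have hparv_ne : par T r v ≠ v := fun h => by rw [h] at hdv; omega
      have hbd' : bdF T r hlf K' = insert v (bdF T r hlf K \ ch T r hlf v) := by
        ext w
        by_cases hvw : v = w
        · subst hvw
          simp only [Finset.mem_insert, true_or, iff_true]
          rw [mem_bdF T r ht]
          exact ⟨Finset.notMem_erase v K, hvr, Finset.mem_erase.2 ⟨hparv_ne, hclosed v hvK hvr⟩⟩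
        · have hwv : w ≠ v := fun h => hvw h.symm
          rw [mem_bdF T r ht, Finset.mem_insert, Finset.mem_sdiff, mem_bdF T r ht, hK',
            Finset.mem_erase, Finset.mem_erase, mem_ch_iff_par T r ht]
          constructor
          · rintro ⟨hw1, hw2, hw3, hw4⟩
            exact Or.inr ⟨⟨fun h => hw1 ⟨hwv, h⟩, hw2, hw4⟩, fun h => hw3 h.2⟩
          · rintro (h | ⟨⟨hw1, hw2, hw3⟩, hw4⟩)
            · exact absurd h hwv
            · exact ⟨fun h => hw1 h.2, hw2, fun h => hw4 ⟨hw2, h⟩, hw3⟩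
      have hsub : ch T r hlf v ⊆ bdF T r hlf K := by
        intro u hu
        rw [mem_bdF T r ht]
        obtain ⟨hur, hpu⟩ := (mem_ch_iff_par T r ht).1 hu
        exact ⟨hchK u hu, hur, hpu ▸ hvK⟩
      have hvnot : v ∉ bdF T r hlf K \ ch T r hlf v := by
        rw [Finset.mem_sdiff, mem_bdF T r ht]
        rintro ⟨⟨h, -⟩, -⟩
        exact h hvK
      calc θ r ≤ ∑ w ∈ bdF T r hlf K', θ w := hIH
        _ = θ v + ∑ w ∈ bdF T r hlf K \ ch T r hlf v, θ w := by
            rw [hbd', Finset.sum_insert hvnot]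
        _ = ∑ w ∈ bdF T r hlf K \ ch T r hlf v, θ w + ∑ w ∈ ch T r hlf v, θ w := by
            rw [hθ v, add_comm]
        _ = ∑ w ∈ bdF T r hlf K, θ w := Finset.sum_sdiff hsub

lemma flow_le_cutsetWeight (ht : T.IsTree) (hlf : T.LocallyFinite) {lam : ℝ≥0∞}
    (θ : V → ℝ≥0∞) (hflow : IsFlow T r θ)
    (hcap : ∀ v : V, v ≠ r → θ v ≤ (lam ^ T.dist r v)⁻¹)
    {Cut : Set (Sym2 V)} (hcut : IsCutset T r Cut) :
    θ r ≤ cutsetWeight T r lam Cut := by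
  classical
  have hθ : ∀ v, θ v = ∑ w ∈ ch T r hlf v, θ w := fun v =>
    (hflow v).trans (tsum_children T r hlf θ v)
  set K := hcut.2.toFinset with hKdef
  have hmemK : ∀ v, v ∈ K ↔ (T.deleteEdges Cut).Reachable r v := fun v =>
    Set.Finite.mem_toFinset _
  have hrK : r ∈ K := (hmemK r).2 (Reachable.refl r)
  have hclosed : ∀ v ∈ K, v ≠ r → par T r v ∈ K := by
    intro v hv hvr
    exact (hmemK _).2 (reach_parent T r ht hvr ((hmemK v).1 hv)).1
  have hbd_edge : ∀ w ∈ bdF T r hlf K, s(par T r w, w) ∈ Cut := by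
    intro w hw
    obtain ⟨hnK, hwr, hpK⟩ := (mem_bdF T r ht).1 hw
    by_contra hnc
    refine hnK ((hmemK w).2 (((hmemK _).1 hpK).trans (SimpleGraph.Adj.reachable ?_)))
    rw [SimpleGraph.deleteEdges_adj]
    exact ⟨(par_spec T r ht.isConnected hwr).1, hnc⟩
  have h1 : θ r ≤ ∑ w ∈ bdF T r hlf K, θ w := flow_le_bd T r ht hlf θ hθ K hrK hclosed
  have h2 : ∑ w ∈ bdF T r hlf K, θ w ≤ ∑ w ∈ bdF T r hlf K, (lam ^ T.dist r w)⁻¹ :=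
    Finset.sum_le_sum fun w hw => hcap w ((mem_bdF T r ht).1 hw).2.1
  have h3 : ∑ w ∈ bdF T r hlf K, (lam ^ T.dist r w)⁻¹
      = ∑' w : ↥(bdF T r hlf K : Set V), (lam ^ T.dist r (w : V))⁻¹ :=
    (Finset.tsum_subtype' _ (fun w => (lam ^ T.dist r w)⁻¹)).symm
  have hwr : ∀ w : ↥(bdF T r hlf K : Set V), (w : V) ≠ r := fun w =>
    ((mem_bdF T r ht).1 (by exact_mod_cast w.2)).2.1
  have hinj : Function.Injective (fun w : ↥(bdF T r hlf K : Set V) =>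
      (⟨s(par T r (w : V), (w : V)), hbd_edge _ (by exact_mod_cast w.2)⟩ : ↥Cut)) := by
    intro w₁ w₂ h
    simp only [Subtype.mk_eq_mk] at h
    exact Subtype.ext (parEdge_injOn T r ht (fun a ha => ((mem_bdF T r ht).1 ha).2.1)
      w₁.2 w₂.2 h)
  have h4 : ∑' w : ↥(bdF T r hlf K : Set V), (lam ^ T.dist r (w : V))⁻¹
      ≤ ∑' e : ↥Cut, (lam ^ edgeDist T r (e : Sym2 V))⁻¹ := by
    refine ENNReal.summable.tsum_le_tsum_of_inj _ hinj (fun _ _ => zero_le) (fun w => ?_)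
      ENNReal.summable
    rw [edgeDist_parEdge T r ht (hwr w)]
  exact h1.trans (h2.trans (h3.le.trans h4))

lemma exists_flow (ht : T.IsTree) (hlf : T.LocallyFinite) {lam ε : ℝ≥0∞} (hε : 0 < ε)
    (hc : ∀ Cut, IsCutset T r Cut → ε ≤ cutsetWeight T r lam Cut) :
    ∃ θ : V → ℝ≥0∞, IsFlow T r θ ∧ 0 < θ r ∧
      ∀ v : V, v ≠ r → θ v ≤ (lam ^ T.dist r v)⁻¹ := by
  classical
  obtain ⟨U, hU⟩ := Filter.exists_ultrafilter_le (Filter.atTop : Filter ℕ)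
  set f : ℕ → V → ℝ≥0∞ := fun n => thetaN T r hlf lam n with hf
  have hconv : ∀ v, ∃ a, Filter.Tendsto (fun n => f n v) (U : Filter ℕ) (nhds a) := by
    intro v
    obtain ⟨a, -, ha⟩ := (isCompact_univ (X := ℝ≥0∞)).ultrafilter_le_nhds
      (U.map (fun n => f n v)) (by simp)
    refine ⟨a, ?_⟩
    rwa [Filter.Tendsto, ← Ultrafilter.coe_map]
  choose θ hθ using hconv
  have hflow : ∀ v, θ v = ∑ w ∈ ch T r hlf v, θ w := by
    intro v
    have hev : ∀ᶠ n in (U : Filter ℕ), f n v = ∑ w ∈ ch T r hlf v, f n w := by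
      refine Filter.Eventually.filter_mono hU ?_
      rw [Filter.eventually_atTop]
      exact ⟨T.dist r v + 1, fun n hn => theta_cons T r ht hlf lam n v (by omega)⟩
    have h1 : Filter.Tendsto (fun n => ∑ w ∈ ch T r hlf v, f n w) (U : Filter ℕ)
        (nhds (θ v)) := Filter.Tendsto.congr' hev (hθ v)
    have h2 : Filter.Tendsto (fun n => ∑ w ∈ ch T r hlf v, f n w) (U : Filter ℕ)
        (nhds (∑ w ∈ ch T r hlf v, θ w)) := tendsto_finset_sum _ (fun w _ => hθ w)
    exact tendsto_nhds_unique h1 h2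
  have hcap : ∀ v : V, v ≠ r → θ v ≤ (lam ^ T.dist r v)⁻¹ := by
    intro v hv
    refine le_of_tendsto (hθ v) (Filter.Eventually.of_forall fun n => ?_)
    exact (theta_cap T r hlf lam n hv ht.isConnected).trans (Cfun_le T r hlf lam _ v)
  have hroot : ε ≤ θ r := by
    refine ge_of_tendsto (hθ r) ?_
    refine Filter.Eventually.filter_mono hU ?_
    rw [Filter.eventually_atTop]
    refine ⟨1, fun n hn => ?_⟩
    rw [hf]
    simp only
    rw [theta_root T r hlf lam n]
    exact cut_bound T r ht hlf hc (n - 1)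
  refine ⟨θ, ?_, hε.trans_le hroot, hcap⟩
  intro v
  rw [tsum_children T r hlf θ v]
  exact hflow v

end MFMC

/-- max-flow min-cut: the flow definition and the cutset definition of the
branching number agree. -/
theorem stmt_9 {V : Type*} (T : SimpleGraph V) [Infinite V] (hlf : T.LocallyFinite)
    (ht : T.IsTree) (r : V) :
    sSup {lam : ℝ≥0∞ | ∃ θ : V → ℝ≥0∞, IsFlow T r θ ∧ 0 < θ r ∧
        ∀ v : V, v ≠ r → θ v ≤ (lam ^ T.dist r v)⁻¹} = branchingNumber T r := by
  letI := Classical.decEq V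
  apply le_antisymm
  · refine sSup_le fun lam hlam => ?_
    obtain ⟨θ, hflow, hpos, hcap⟩ := hlam
    exact le_sSup ⟨θ r, hpos, fun Cut hCut =>
      MFMC.flow_le_cutsetWeight T r ht hlf θ hflow hcap hCut⟩
  · refine sSup_le fun lam hlam => ?_
    obtain ⟨ε, hε, hc⟩ := hlam
    obtain ⟨θ, hflow, hpos, hcap⟩ := MFMC.exists_flow T r ht hlf hε hc
    exact le_sSup ⟨θ, hflow, hpos, hcap⟩
end

section
/- A Cayley graph of a finitely generated group of exponential growth (growth rate α > 1) does not satisfy polynomial containment: for every polynomial p, the graph does not satisfy p(n)-containment. -/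
open scoped ENNReal NNReal

open Firefight

/-- The Cayley graph of a group `Γ` with respect to a set `S` of generators
(edges correspond to right multiplication by a generator or its inverse). -/
def cayley (Γ : Type*) [Group Γ] (S : Set Γ) : SimpleGraph Γ where
  Adj v w := v ≠ w ∧ (v⁻¹ * w ∈ S ∨ w⁻¹ * v ∈ S)
  symm := ⟨fun v w h => ⟨h.1.symm, h.2.symm⟩⟩
  loopless := ⟨fun v h => h.1 rfl⟩

namespace Stmt13Aux

open SimpleGraph hiding ball
open Finset

/-! ### Generic graph lemmas -/

variable {V : Type*}

private lemma dist_tri (G : SimpleGraph V) {u v w : V} (h1 : G.Reachable u v)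
    (h2 : G.Reachable v w) : G.dist u w ≤ G.dist u v + G.dist v w := by
  obtain ⟨p, hp⟩ := h1.exists_walk_length_eq_dist
  obtain ⟨q, hq⟩ := h2.exists_walk_length_eq_dist
  calc G.dist u w ≤ (p.append q).length := G.dist_le _
    _ = G.dist u v + G.dist v w := by rw [Walk.length_append, hp, hq]

private lemma exists_adj_pred (G : SimpleGraph V) (r : V) (k : ℕ) {v : V}
    (hd : G.dist r v = k + 1) : ∃ u, G.Adj u v ∧ G.dist r u = k := by
  have hr : G.Reachable r v := Reachable.of_dist_ne_zero (by omega)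
  obtain ⟨p, hp⟩ := hr.exists_walk_length_eq_dist
  have hq : p.reverse.length = k + 1 := by rw [Walk.length_reverse, hp, hd]
  cases hrev : p.reverse with
  | nil =>
      rw [hrev] at hq; simp at hq
  | @cons _ u _ hadj q =>
      refine ⟨u, hadj.symm, ?_⟩
      rw [hrev] at hq
      simp only [Walk.length_cons] at hq
      have h1 : G.dist r u ≤ k := by
        have := G.dist_le q.reverse
        rw [Walk.length_reverse] at this
        omega
      have h2 : G.dist u v ≤ 1 := by
        simpa using G.dist_le (Walk.cons hadj.symm Walk.nil)
      have h3 : G.dist r v ≤ G.dist r u + G.dist u v :=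
        dist_tri G ⟨q.reverse⟩ hadj.symm.reachable
      omega

private lemma protSet_finite {s : ℕ → Set V} (hfin : ∀ n, (s n).Finite) (n : ℕ) :
    (protSet s n).Finite := by
  induction n with
  | zero => simp [protSet]
  | succ n ih => exact ih.union (hfin n)

private lemma protSet_ncard {G : SimpleGraph V} {f : ℕ → ℕ} {X₀ : Set V} {s : ℕ → Set V}
    (hs : ValidStrategy G f X₀ s) (n : ℕ) :
    (protSet s n).ncard ≤ ∑ t ∈ Finset.range n, f (t + 1) := by
  induction n with
  | zero => simp [protSet]
  | succ n ih =>
      calc (protSet s (n + 1)).ncard ≤ (protSet s n).ncard + (s n).ncard :=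
            Set.ncard_union_le _ _
        _ ≤ (∑ t ∈ Finset.range n, f (t + 1)) + f (n + 1) := add_le_add ih (hs n).2.1
        _ = _ := (Finset.sum_range_succ _ n).symm

/-- The key blocking lemma: an unburnt vertex at distance `R+m+1` at time `m+1`
has, on some geodesic from the root, a protected blocker. -/
private lemma blocking (G : SimpleGraph V) (r : V) (R : ℕ) (s : ℕ → Set V) :
    ∀ m v, G.dist r v = R + m + 1 → v ∉ burnSet G (ball G r R) s (m + 1) →
      ∃ i j w, i + j = m + 1 ∧ 1 ≤ i ∧ w ∈ protSet s i ∧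
        G.dist r w = R + i ∧ G.dist w v = j := by
  intro m
  induction m with
  | zero =>
      intro v hd hv
      obtain ⟨u, huv, hu⟩ := exists_adj_pred G r (R + 0) hd
      by_cases hp : v ∈ protSet s 1
      · exact ⟨1, 0, v, rfl, le_refl 1, hp, by simpa using hd, G.dist_self⟩
      · exfalso
        apply hv
        have hub : u ∈ burnSet G (ball G r R) s 0 := by
          simp only [burnSet, ball, Set.mem_setOf_eq]
          omega
        exact Or.inr ⟨hp, u, hub, huv⟩
  | succ m ih =>
      intro v hd hv
      obtain ⟨u, huv, hu⟩ := exists_adj_pred G r (R + (m + 1)) hd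
      by_cases hub : u ∈ burnSet G (ball G r R) s (m + 1)
      · by_cases hp : v ∈ protSet s (m + 2)
        · refine ⟨m + 2, 0, v, by omega, by omega, hp, ?_, G.dist_self⟩
          omega
        · exact absurd (Or.inr ⟨hp, u, hub, huv⟩ : v ∈ burnSet G (ball G r R) s (m + 2)) hv
      · obtain ⟨i, j, w, hij, hi1, hw, hdw, hwu⟩ := ih u (by omega) hub
        refine ⟨i, j + 1, w, by omega, hi1, hw, hdw, ?_⟩
        have hrw : G.Reachable r w := Reachable.of_dist_ne_zero (by omega)
        have hru : G.Reachable r u := Reachable.of_dist_ne_zero (by omega)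
        have hrv : G.Reachable r v := Reachable.of_dist_ne_zero (by omega)
        have hduv : G.dist u v ≤ 1 := by
          simpa using G.dist_le (Walk.cons huv Walk.nil)
        have hle : G.dist w v ≤ j + 1 := by
          have := dist_tri G (hrw.symm.trans hru) huv.reachable
          omega
        have hge : G.dist r v ≤ G.dist r w + G.dist w v :=
          dist_tri G hrw (hrw.symm.trans hrv)
        omega

private lemma ncard_biUnion_le_finset {ι β : Type*} (F : Finset ι) (g : ι → Set β) :
    (⋃ i ∈ F, g i).ncard ≤ ∑ i ∈ F, (g i).ncard := by
  classical
  induction F using Finset.induction with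
  | empty => simp
  | @insert a F ha ih =>
      rw [Finset.set_biUnion_insert, Finset.sum_insert ha]
      exact le_trans (Set.ncard_union_le _ _) (add_le_add le_rfl ih)

private lemma ncard_biUnion_le_set {α β : Type*} {T : Set α} (hT : T.Finite)
    {g : α → Set β} {k : ℕ} (hk : ∀ w ∈ T, (g w).ncard ≤ k) :
    (⋃ w ∈ T, g w).ncard ≤ T.ncard * k := by
  classical
  have h1 : (⋃ w ∈ T, g w) = ⋃ w ∈ hT.toFinset, g w := by
    simp [Set.Finite.mem_toFinset]
  rw [h1]
  calc (⋃ w ∈ hT.toFinset, g w).ncard ≤ ∑ w ∈ hT.toFinset, (g w).ncard :=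
        ncard_biUnion_le_finset _ _
    _ ≤ hT.toFinset.card * k := by
        apply Finset.sum_le_card_nsmul
        intro w hw
        exact hk w (hT.mem_toFinset.mp hw)
    _ = T.ncard * k := by rw [Set.ncard_eq_toFinset_card _ hT]

/-! ### Cayley graph lemmas -/

variable {Γ : Type*} [Group Γ]

private def cayleyMulHom (T : Set Γ) (g : Γ) : cayley Γ T →g cayley Γ T where
  toFun v := g * v
  map_rel' := by
    intro a b h
    refine (show g * a ≠ g * b ∧ ((g * a)⁻¹ * (g * b) ∈ T ∨ (g * b)⁻¹ * (g * a) ∈ T) from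
      ⟨fun e => h.1 (mul_left_cancel e), ?_⟩)
    simpa [mul_inv_rev, mul_assoc] using h.2

private lemma cayley_dist_mul_le (T : Set Γ) (g u v : Γ) :
    (cayley Γ T).dist (g * u) (g * v) ≤ (cayley Γ T).dist u v := by
  by_cases h : (cayley Γ T).Reachable u v
  · obtain ⟨p, hp⟩ := h.exists_walk_length_eq_dist
    calc (cayley Γ T).dist (g * u) (g * v) ≤ (p.map (cayleyMulHom T g)).length :=
          SimpleGraph.dist_le _
      _ = p.length := p.length_map _
      _ = (cayley Γ T).dist u v := hp
  · rw [SimpleGraph.dist_eq_zero_of_not_reachable h,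
      SimpleGraph.dist_eq_zero_of_not_reachable]
    intro hr
    have h2 : (cayley Γ T).Reachable (g⁻¹ * (g * u)) (g⁻¹ * (g * v)) :=
      hr.map (cayleyMulHom T g⁻¹)
    simp only [inv_mul_cancel_left] at h2
    exact h h2

private lemma cayley_dist_mul (T : Set Γ) (g u v : Γ) :
    (cayley Γ T).dist (g * u) (g * v) = (cayley Γ T).dist u v := by
  refine le_antisymm (cayley_dist_mul_le T g u v) ?_
  have := cayley_dist_mul_le T g⁻¹ (g * u) (g * v)
  simpa using this

private lemma shadow_eq_image (T : Set Γ) (w : Γ) (m : ℕ) :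
    {v | (cayley Γ T).dist w v = m} = (fun x => w * x) '' {v | (cayley Γ T).dist 1 v = m} := by
  ext v
  simp only [Set.mem_setOf_eq, Set.mem_image]
  constructor
  · intro hv
    refine ⟨w⁻¹ * v, ?_, by simp⟩
    have := cayley_dist_mul T w 1 (w⁻¹ * v)
    rw [mul_one, mul_inv_cancel_left] at this
    exact this.symm.trans hv
  · rintro ⟨x, hx, rfl⟩
    have := cayley_dist_mul T w 1 x
    rw [mul_one] at this
    exact this.trans hx

private lemma shadow_ncard (T : Set Γ) (w : Γ) (m : ℕ) :
    {v | (cayley Γ T).dist w v = m}.ncard = {v | (cayley Γ T).dist 1 v = m}.ncard := by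
  rw [shadow_eq_image, Set.ncard_image_of_injective _ (mul_right_injective w)]

private lemma shadow_finite (T : Set Γ) (w : Γ) (m : ℕ)
    (h : {v | (cayley Γ T).dist 1 v = m}.Finite) :
    {v | (cayley Γ T).dist w v = m}.Finite := by
  rw [shadow_eq_image]; exact h.image _


private lemma sphere_count (T : Set Γ) (R : ℕ) (s : ℕ → Set Γ) (f : ℕ → ℕ)
    (hs : ValidStrategy (cayley Γ T) f (ball (cayley Γ T) 1 R) s)
    (hsphfin : ∀ k, {v | (cayley Γ T).dist 1 v = k}.Finite) (m : ℕ)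
    (hout : ∀ v, (cayley Γ T).dist 1 v = R + m + 1 →
      v ∉ burnSet (cayley Γ T) (ball (cayley Γ T) 1 R) s (m + 1)) :
    {v | (cayley Γ T).dist 1 v = R + m + 1}.ncard ≤
      ∑ i ∈ Finset.Icc 1 (m + 1),
        (∑ t ∈ Finset.range i, f (t + 1)) * {v | (cayley Γ T).dist 1 v = (m + 1) - i}.ncard := by
  classical
  set G := cayley Γ T with hG
  have hprotfin : ∀ n, (protSet s n).Finite := protSet_finite (fun n => (hs n).1)
  have hcover : {v | G.dist 1 v = R + m + 1} ⊆
      ⋃ i ∈ Finset.Icc 1 (m + 1), ⋃ w ∈ (protSet s i ∩ {w | G.dist 1 w = R + i}),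
        {v | G.dist w v = (m + 1) - i} := by
    intro v hv
    obtain ⟨i, j, w, hij, hi1, hw, hdw, hwv⟩ := blocking G 1 R s m v hv (hout v hv)
    simp only [Set.mem_iUnion, Finset.mem_Icc, Set.mem_inter_iff, Set.mem_setOf_eq,
      exists_prop]
    exact ⟨i, ⟨hi1, by omega⟩, w, ⟨hw, hdw⟩, by omega⟩
  have hsfin : ∀ i w, {v | G.dist w v = (m + 1) - i}.Finite :=
    fun i w => shadow_finite T w _ (hsphfin _)
  have hUfin : (⋃ i ∈ Finset.Icc 1 (m + 1),
      ⋃ w ∈ (protSet s i ∩ {w | G.dist 1 w = R + i}), {v | G.dist w v = (m + 1) - i}).Finite := by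
    apply Set.Finite.biUnion (Finset.Icc 1 (m + 1)).finite_toSet
    intro i _
    apply Set.Finite.biUnion ((hprotfin i).inter_of_left _)
    intro w _
    exact hsfin i w
  calc {v | G.dist 1 v = R + m + 1}.ncard ≤ _ := Set.ncard_le_ncard hcover hUfin
    _ ≤ ∑ i ∈ Finset.Icc 1 (m + 1),
        (⋃ w ∈ (protSet s i ∩ {w | G.dist 1 w = R + i}),
          {v | G.dist w v = (m + 1) - i}).ncard := ncard_biUnion_le_finset _ _
    _ ≤ _ := by
      apply Finset.sum_le_sum
      intro i _
      calc (⋃ w ∈ (protSet s i ∩ {w | G.dist 1 w = R + i}),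
            {v | G.dist w v = (m + 1) - i}).ncard
          ≤ (protSet s i ∩ {w | G.dist 1 w = R + i}).ncard *
              {v | G.dist 1 v = (m + 1) - i}.ncard := by
            apply ncard_biUnion_le_set ((hprotfin i).inter_of_left _)
            intro w _
            rw [shadow_ncard]
        _ ≤ (∑ t ∈ Finset.range i, f (t + 1)) * {v | G.dist 1 v = (m + 1) - i}.ncard := by
            exact mul_le_mul_left
              (le_trans (Set.ncard_le_ncard Set.inter_subset_left (hprotfin i))
                (protSet_ncard hs i)) _

private lemma sum_sph (T : Set Γ) (hfin : ∀ k, (ball (cayley Γ T) 1 k).Finite) (M : ℕ) :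
    ∑ D ∈ Finset.range (M + 1), {v | (cayley Γ T).dist 1 v = D}.ncard =
      (ball (cayley Γ T) 1 M).ncard := by
  induction M with
  | zero =>
      simp only [zero_add, Finset.range_one, Finset.sum_singleton]
      congr 1
      ext v
      simp [ball, Nat.le_zero]
  | succ M ih =>
      rw [Finset.sum_range_succ, ih]
      have hsplit : ball (cayley Γ T) 1 (M + 1) =
          ball (cayley Γ T) 1 M ∪ {v | (cayley Γ T).dist 1 v = M + 1} := by
        ext v; simp only [ball, Set.mem_setOf_eq, Set.mem_union]; omega
      have hdisj : Disjoint (ball (cayley Γ T) 1 M) {v | (cayley Γ T).dist 1 v = M + 1} := by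
        rw [Set.disjoint_left]
        intro v hv hv'
        simp only [ball, Set.mem_setOf_eq] at hv hv'
        omega
      rw [hsplit, Set.ncard_union_eq hdisj (hfin M) ((hfin (M + 1)).subset ?_)]
      intro v hv
      simp only [Set.mem_setOf_eq] at hv
      simp [ball, hv]

private lemma double_sum_le {F : ℕ → ℕ → ℝ} (hF : ∀ i m, 0 ≤ F i m) (R D₁ M : ℕ)
    (hR : R + 1 ≤ D₁) :
    ∑ D ∈ Finset.Ico D₁ (M + 1), ∑ i ∈ Finset.Icc 1 (D - R), F i (D - R - i) ≤
      ∑ i ∈ Finset.Icc 1 M, ∑ m ∈ Finset.range (M + 1), F i m := by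
  classical
  have hinj : ∀ p ∈ (Finset.Ico D₁ (M + 1)).sigma (fun D => Finset.Icc 1 (D - R)),
      ∀ q ∈ (Finset.Ico D₁ (M + 1)).sigma (fun D => Finset.Icc 1 (D - R)),
      (fun p : Σ _ : ℕ, ℕ => (p.2, p.1 - R - p.2)) p =
        (fun p : Σ _ : ℕ, ℕ => (p.2, p.1 - R - p.2)) q → p = q := by
    rintro ⟨D, i⟩ hp ⟨D', i'⟩ hq h
    simp only [Finset.mem_sigma, Finset.mem_Ico, Finset.mem_Icc] at hp hq
    simp only [Prod.mk.injEq] at h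
    obtain ⟨h1, h2⟩ := h
    have hDD : D = D' := by omega
    subst hDD; subst h1; rfl
  have h1 : ∑ D ∈ Finset.Ico D₁ (M + 1), ∑ i ∈ Finset.Icc 1 (D - R), F i (D - R - i) =
      ∑ p ∈ (Finset.Ico D₁ (M + 1)).sigma (fun D => Finset.Icc 1 (D - R)),
        F p.2 (p.1 - R - p.2) :=
    (Finset.sum_sigma (Finset.Ico D₁ (M + 1)) (fun D => Finset.Icc 1 (D - R))
      (fun p => F p.2 (p.1 - R - p.2))).symm
  have h2 : ∑ q ∈ ((Finset.Ico D₁ (M + 1)).sigma (fun D => Finset.Icc 1 (D - R))).image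
        (fun p : Σ _ : ℕ, ℕ => (p.2, p.1 - R - p.2)), F q.1 q.2 =
      ∑ p ∈ (Finset.Ico D₁ (M + 1)).sigma (fun D => Finset.Icc 1 (D - R)),
        F p.2 (p.1 - R - p.2) :=
    Finset.sum_image hinj
  have h3 : ∑ i ∈ Finset.Icc 1 M, ∑ m ∈ Finset.range (M + 1), F i m =
      ∑ q ∈ Finset.Icc 1 M ×ˢ Finset.range (M + 1), F q.1 q.2 :=
    (Finset.sum_product (Finset.Icc 1 M) (Finset.range (M + 1)) (fun q => F q.1 q.2)).symm
  rw [h1, ← h2, h3]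
  apply Finset.sum_le_sum_of_subset_of_nonneg
  · intro q hq
    simp only [Finset.mem_image, Finset.mem_sigma, Finset.mem_Ico, Finset.mem_Icc] at hq
    obtain ⟨p, hp, rfl⟩ := hq
    obtain ⟨D, i⟩ := p
    obtain ⟨hD, hi⟩ := hp
    dsimp only at hD hi ⊢
    simp only [Finset.mem_product, Finset.mem_Icc, Finset.mem_range]
    refine ⟨⟨by omega, by omega⟩, by omega⟩
  · intro q _ _
    exact hF q.1 q.2

/-! ### Polynomial and summability lemmas -/

private lemma poly_bound (p : Polynomial ℕ) : ∃ C d : ℕ,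
    ∀ i, (∑ t ∈ Finset.range i, p.eval (t + 1)) ≤ C * (i + 1) ^ (d + 1) := by
  refine ⟨∑ k ∈ Finset.range (p.natDegree + 1), p.coeff k, p.natDegree, ?_⟩
  intro i
  have heval : ∀ n : ℕ, n ≤ i → p.eval (n + 1) ≤
      (∑ k ∈ Finset.range (p.natDegree + 1), p.coeff k) * (i + 1) ^ p.natDegree := by
    intro n hn
    rw [Polynomial.eval_eq_sum_range, Finset.sum_mul]
    apply Finset.sum_le_sum
    intro k hk
    simp only [Finset.mem_range] at hk
    apply Nat.mul_le_mul_left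
    calc (n + 1) ^ k ≤ (i + 1) ^ k := Nat.pow_le_pow_left (by omega) k
      _ ≤ (i + 1) ^ p.natDegree := Nat.pow_le_pow_right (by omega) (by omega)
  calc (∑ t ∈ Finset.range i, p.eval (t + 1)) ≤
      ∑ _t ∈ Finset.range i,
        (∑ k ∈ Finset.range (p.natDegree + 1), p.coeff k) * (i + 1) ^ p.natDegree := by
        apply Finset.sum_le_sum
        intro t ht
        exact heval t (by simp only [Finset.mem_range] at ht; omega)
    _ = i * ((∑ k ∈ Finset.range (p.natDegree + 1), p.coeff k) * (i + 1) ^ p.natDegree) := by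
        rw [Finset.sum_const, Finset.card_range, smul_eq_mul]
    _ ≤ (∑ k ∈ Finset.range (p.natDegree + 1), p.coeff k) * (i + 1) ^ (p.natDegree + 1) := by
        rw [pow_succ]
        calc i * ((∑ k ∈ Finset.range (p.natDegree + 1), p.coeff k) * (i + 1) ^ p.natDegree)
            = (∑ k ∈ Finset.range (p.natDegree + 1), p.coeff k) * ((i + 1) ^ p.natDegree * i) := by
              ring
          _ ≤ _ := Nat.mul_le_mul_left _ (Nat.mul_le_mul_left _ (by omega))

set_option maxHeartbeats 2000000 in
private lemma exists_A {x : ℝ} (hx0 : 0 < x) (hx1 : x < 1) (a : ℕ → ℕ) (C d : ℕ)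
    (ha : ∀ i, a i ≤ C * (i + 1) ^ (d + 1)) :
    ∃ A : ℝ, 0 ≤ A ∧ ∀ F : Finset ℕ, ∑ i ∈ F, (a i : ℝ) * x ^ i ≤ A := by
  have h1 : Summable (fun n : ℕ => (n : ℝ) ^ (d + 1) * x ^ n) :=
    summable_pow_mul_geometric_of_norm_lt_one (d + 1)
      (by rwa [Real.norm_eq_abs, abs_of_pos hx0])
  have h2 : Summable (fun n : ℕ => ((n + 1 : ℕ) : ℝ) ^ (d + 1) * x ^ (n + 1)) :=
    (summable_nat_add_iff 1).mpr h1
  have h3 : Summable (fun n : ℕ => (C : ℝ) * (((n : ℝ) + 1) ^ (d + 1) * x ^ n)) := by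
    apply (h2.mul_left ((C : ℝ) * x⁻¹)).congr
    intro n
    rw [pow_succ x n]
    rw [show ((n + 1 : ℕ) : ℝ) = (n : ℝ) + 1 from by push_cast; ring]
    rw [show ((C : ℝ) * x⁻¹) * (((n : ℝ) + 1) ^ (d + 1) * (x ^ n * x)) =
      (C : ℝ) * (((n : ℝ) + 1) ^ (d + 1) * x ^ n) * (x⁻¹ * x) from by ring,
      inv_mul_cancel₀ hx0.ne', mul_one]
  have hgnn : ∀ n : ℕ, (0 : ℝ) ≤ (C : ℝ) * (((n : ℝ) + 1) ^ (d + 1) * x ^ n) := by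
    intro n
    positivity
  refine ⟨∑' n : ℕ, (C : ℝ) * (((n : ℝ) + 1) ^ (d + 1) * x ^ n), tsum_nonneg hgnn, ?_⟩
  intro F
  have hstep : ∑ i ∈ F, (a i : ℝ) * x ^ i ≤
      ∑ i ∈ F, (C : ℝ) * (((i : ℝ) + 1) ^ (d + 1) * x ^ i) := by
    apply Finset.sum_le_sum
    intro i _
    rw [← mul_assoc]
    apply mul_le_mul_of_nonneg_right _ (pow_nonneg hx0.le i)
    calc (a i : ℝ) ≤ ((C * (i + 1) ^ (d + 1) : ℕ) : ℝ) := Nat.cast_le.mpr (ha i)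
      _ = (C : ℝ) * ((i : ℝ) + 1) ^ (d + 1) := by push_cast; ring
  exact le_trans hstep (Summable.sum_le_tsum F (fun i _ => hgnn i) h3)

private lemma factor_sum (g h : ℕ → ℝ) (y : ℝ) (F1 F2 : Finset ℕ) :
    ∑ i ∈ F1, ∑ m ∈ F2, g i * h m * y = (∑ i ∈ F1, g i) * (∑ m ∈ F2, h m) * y := by
  rw [Finset.sum_mul, Finset.sum_mul]
  refine Finset.sum_congr rfl fun i _ => ?_
  rw [← Finset.sum_mul, ← Finset.mul_sum]

end Stmt13Aux

set_option maxHeartbeats 1000000 in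
open Stmt13Aux in
/-- a Cayley graph of a finitely generated group of exponential growth
(growth rate `α > 1`) does not satisfy `p(n)`-containment for any polynomial `p`. -/
theorem stmt_13 {Γ : Type*} [Group Γ] (S : Finset Γ)
    (hgen : Subgroup.closure (S : Set Γ) = ⊤) (α : ℝ)
    (hα : Filter.Tendsto
      (fun k : ℕ => ((ball (cayley Γ (S : Set Γ)) 1 k).ncard : ℝ) ^ ((k : ℝ)⁻¹))
      Filter.atTop (nhds α))
    (hα1 : 1 < α) :
    ∀ p : Polynomial ℕ, ¬ Containment (cayley Γ (S : Set Γ)) (fun n => p.eval n) := by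
  classical
  intro p hC
  set G := cayley Γ (S : Set Γ) with hGdef
  have hα0 : (0 : ℝ) < α := lt_trans one_pos hα1
  set lam : ℝ := (1 + α) / 2 with hlamdef
  have hlam1 : 1 < lam := by rw [hlamdef]; linarith
  have hlamα : lam < α := by rw [hlamdef]; linarith
  set lam' : ℝ := (lam + α) / 2 with hlam'def
  have hlam'1 : 1 < lam' := by rw [hlam'def]; linarith
  have hlamlam' : lam < lam' := by rw [hlam'def]; linarith
  have hlam'α : lam' < α := by rw [hlam'def]; linarith
  set x : ℝ := lam⁻¹ with hxdef
  have hx0 : 0 < x := by rw [hxdef]; exact inv_pos.mpr (by linarith)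
  have hx1 : x < 1 := by rw [hxdef]; exact inv_lt_one_of_one_lt₀ hlam1
  -- growth bounds
  have hev : ∀ᶠ k : ℕ in Filter.atTop,
      lam' < ((ball G 1 k).ncard : ℝ) ^ ((k : ℝ)⁻¹) :=
    hα.eventually (eventually_gt_nhds hlam'α)
  have hgrow : ∀ᶠ k : ℕ in Filter.atTop, lam' ^ k ≤ ((ball G 1 k).ncard : ℝ) := by
    filter_upwards [hev, Filter.eventually_ge_atTop 1] with k hk hk1
    have hkne : (k : ℝ) ≠ 0 := Nat.cast_ne_zero.mpr (by omega)
    have hcalc : ((((ball G 1 k).ncard : ℝ)) ^ ((k : ℝ)⁻¹)) ^ (k : ℕ)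
        = ((ball G 1 k).ncard : ℝ) := by
      rw [← Real.rpow_natCast ((((ball G 1 k).ncard : ℝ)) ^ ((k : ℝ)⁻¹)) k,
        ← Real.rpow_mul (Nat.cast_nonneg _), inv_mul_cancel₀ hkne, Real.rpow_one]
    calc lam' ^ k ≤ ((((ball G 1 k).ncard : ℝ)) ^ ((k : ℝ)⁻¹)) ^ k :=
          pow_le_pow_left₀ (by linarith) hk.le k
      _ = _ := hcalc
  have hballfin : ∀ k, (ball G 1 k).Finite := by
    intro k
    obtain ⟨M, hM1, hM2⟩ := (hgrow.and (Filter.eventually_ge_atTop k)).exists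
    have h1 : (1 : ℝ) ≤ ((ball G 1 M).ncard : ℝ) :=
      le_trans (by calc (1:ℝ) = 1 ^ M := (one_pow M).symm
        _ ≤ lam' ^ M := pow_le_pow_left₀ zero_le_one hlam'1.le M) hM1
    have h2 : (ball G 1 M).ncard ≠ 0 := by
      intro h0; rw [h0] at h1; norm_num at h1
    have hfinM : (ball G 1 M).Finite := by
      by_contra hinf
      exact h2 (Set.Infinite.ncard hinf)
    exact hfinM.subset (fun v hv => by
      simp only [ball, Set.mem_setOf_eq] at hv ⊢
      omega)
  have hsphfin : ∀ k, {v : Γ | G.dist 1 v = k}.Finite := by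
    intro k
    exact (hballfin k).subset (fun v hv => by
      simp only [Set.mem_setOf_eq] at hv
      simp only [ball, Set.mem_setOf_eq]
      omega)
  -- budget bounds
  obtain ⟨C, d, hCd⟩ := poly_bound p
  obtain ⟨A, hA0, hAbd⟩ :=
    exists_A hx0 hx1 (fun i => ∑ t ∈ Finset.range i, p.eval (t + 1)) C d hCd
  have hxRlim : Filter.Tendsto (fun R : ℕ => x ^ R * A) Filter.atTop (nhds 0) := by
    have := (tendsto_pow_atTop_nhds_zero_of_lt_one hx0.le hx1).mul_const A
    simpa using this
  obtain ⟨R, hR⟩ :=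
    (hxRlim.eventually (eventually_lt_nhds (show (0 : ℝ) < 1/2 by norm_num))).exists
  -- apply containment
  obtain ⟨s, hs, hcont⟩ := hC (ball G 1 R) (hballfin R)
  obtain ⟨d₀, hd₀⟩ := (hcont.image (G.dist 1)).bddAbove
  have hout : ∀ m, d₀ < R + m + 1 → ∀ v, G.dist 1 v = R + m + 1 →
      v ∉ burnSet G (ball G 1 R) s (m + 1) := by
    intro m hm v hv hvb
    have hmem : G.dist 1 v ∈ (G.dist 1) '' (⋃ n, burnSet G (ball G 1 R) s n) :=
      Set.mem_image_of_mem _ (Set.mem_iUnion.mpr ⟨m + 1, hvb⟩)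
    have := hd₀ hmem
    omega
  set D₁ : ℕ := max (d₀ + 1) (R + 1) with hD₁def
  -- recursive bound
  have hrec : ∀ M, D₁ ≤ M →
      ∑ D ∈ Finset.range (M + 1), ({v : Γ | G.dist 1 v = D}.ncard : ℝ) * x ^ D ≤
        (∑ D ∈ Finset.range D₁, ({v : Γ | G.dist 1 v = D}.ncard : ℝ) * x ^ D) +
          x ^ R * A * ∑ D ∈ Finset.range (M + 1), ({v : Γ | G.dist 1 v = D}.ncard : ℝ) * x ^ D := by
    intro M hM
    have hsplit : ∑ D ∈ Finset.range (M + 1), ({v : Γ | G.dist 1 v = D}.ncard : ℝ) * x ^ D =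
        (∑ D ∈ Finset.range D₁, ({v : Γ | G.dist 1 v = D}.ncard : ℝ) * x ^ D) +
          ∑ D ∈ Finset.Ico D₁ (M + 1), ({v : Γ | G.dist 1 v = D}.ncard : ℝ) * x ^ D := by
      simp only [Finset.range_eq_Ico]
      exact (Finset.sum_Ico_consecutive _ (Nat.zero_le D₁) (by omega)).symm
    have hterm : ∀ D ∈ Finset.Ico D₁ (M + 1), ({v : Γ | G.dist 1 v = D}.ncard : ℝ) * x ^ D ≤
        ∑ i ∈ Finset.Icc 1 (D - R),
          ((∑ t ∈ Finset.range i, p.eval (t + 1) : ℕ) : ℝ) * x ^ i *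
            (({v : Γ | G.dist 1 v = D - R - i}.ncard : ℝ) * x ^ (D - R - i)) * x ^ R := by
      intro D hD
      simp only [Finset.mem_Ico] at hD
      have hDR : R + 1 ≤ D := le_trans (le_max_right _ _) hD.1
      have hd₀D : d₀ < D := lt_of_lt_of_le (Nat.lt_succ_self d₀) (le_trans (le_max_left _ _) hD.1)
      have hkey := sphere_count (S : Set Γ) R s (fun n => p.eval n) hs hsphfin (D - R - 1)
        (hout (D - R - 1) (by omega))
      rw [← hGdef] at hkey
      rw [show R + (D - R - 1) + 1 = D from by omega,
        show D - R - 1 + 1 = D - R from by omega] at hkey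
      have hcast : ({v : Γ | G.dist 1 v = D}.ncard : ℝ) ≤
          ∑ i ∈ Finset.Icc 1 (D - R),
            ((∑ t ∈ Finset.range i, p.eval (t + 1) : ℕ) : ℝ) *
              ({v : Γ | G.dist 1 v = D - R - i}.ncard : ℝ) := by
        calc ({v : Γ | G.dist 1 v = D}.ncard : ℝ) ≤
            ((∑ i ∈ Finset.Icc 1 (D - R), (∑ t ∈ Finset.range i, p.eval (t + 1)) *
              {v : Γ | G.dist 1 v = D - R - i}.ncard : ℕ) : ℝ) := Nat.cast_le.mpr hkey
          _ = _ := by push_cast; rfl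
      calc ({v : Γ | G.dist 1 v = D}.ncard : ℝ) * x ^ D ≤
          (∑ i ∈ Finset.Icc 1 (D - R),
            ((∑ t ∈ Finset.range i, p.eval (t + 1) : ℕ) : ℝ) *
              ({v : Γ | G.dist 1 v = D - R - i}.ncard : ℝ)) * x ^ D :=
            mul_le_mul_of_nonneg_right hcast (pow_nonneg hx0.le D)
        _ = _ := by
          rw [Finset.sum_mul]
          apply Finset.sum_congr rfl
          intro i hi
          simp only [Finset.mem_Icc] at hi
          have hxD : x ^ D = x ^ i * x ^ (D - R - i) * x ^ R := by
            rw [← pow_add, ← pow_add]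
            congr 1
            omega
          rw [hxD]; ring
    have htail : ∑ D ∈ Finset.Ico D₁ (M + 1), ({v : Γ | G.dist 1 v = D}.ncard : ℝ) * x ^ D ≤
        x ^ R * A * ∑ m ∈ Finset.range (M + 1), ({v : Γ | G.dist 1 v = m}.ncard : ℝ) * x ^ m := by
      calc ∑ D ∈ Finset.Ico D₁ (M + 1), ({v : Γ | G.dist 1 v = D}.ncard : ℝ) * x ^ D ≤
          ∑ D ∈ Finset.Ico D₁ (M + 1), ∑ i ∈ Finset.Icc 1 (D - R),
            ((∑ t ∈ Finset.range i, p.eval (t + 1) : ℕ) : ℝ) * x ^ i *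
              (({v : Γ | G.dist 1 v = D - R - i}.ncard : ℝ) * x ^ (D - R - i)) * x ^ R :=
            Finset.sum_le_sum hterm
        _ ≤ ∑ i ∈ Finset.Icc 1 M, ∑ m ∈ Finset.range (M + 1),
            ((∑ t ∈ Finset.range i, p.eval (t + 1) : ℕ) : ℝ) * x ^ i *
              (({v : Γ | G.dist 1 v = m}.ncard : ℝ) * x ^ m) * x ^ R :=
            double_sum_le (F := fun i m =>
              ((∑ t ∈ Finset.range i, p.eval (t + 1) : ℕ) : ℝ) * x ^ i *
                (({v : Γ | G.dist 1 v = m}.ncard : ℝ) * x ^ m) * x ^ R)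
              (fun i m => by positivity) R D₁ M (le_max_right _ _)
        _ = (∑ i ∈ Finset.Icc 1 M, ((∑ t ∈ Finset.range i, p.eval (t + 1) : ℕ) : ℝ) * x ^ i) *
            (∑ m ∈ Finset.range (M + 1), ({v : Γ | G.dist 1 v = m}.ncard : ℝ) * x ^ m) * x ^ R :=
            factor_sum _ _ _ _ _
        _ ≤ A * (∑ m ∈ Finset.range (M + 1), ({v : Γ | G.dist 1 v = m}.ncard : ℝ) * x ^ m) * x ^ R := by
            apply mul_le_mul_of_nonneg_right _ (pow_nonneg hx0.le R)
            apply mul_le_mul_of_nonneg_right (hAbd _)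
            apply Finset.sum_nonneg
            intro m _
            positivity
        _ = x ^ R * A * ∑ m ∈ Finset.range (M + 1), ({v : Γ | G.dist 1 v = m}.ncard : ℝ) * x ^ m := by
            ring
    linarith [hsplit, htail]
  have hSignn : ∀ M, 0 ≤ ∑ D ∈ Finset.range (M + 1),
      ({v : Γ | G.dist 1 v = D}.ncard : ℝ) * x ^ D := by
    intro M
    apply Finset.sum_nonneg
    intro D _
    positivity
  have hbound : ∀ M, D₁ ≤ M →
      ∑ D ∈ Finset.range (M + 1), ({v : Γ | G.dist 1 v = D}.ncard : ℝ) * x ^ D ≤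
        2 * ∑ D ∈ Finset.range D₁, ({v : Γ | G.dist 1 v = D}.ncard : ℝ) * x ^ D := by
    intro M hM
    have h1 := hrec M hM
    have h2 : x ^ R * A *
        (∑ D ∈ Finset.range (M + 1), ({v : Γ | G.dist 1 v = D}.ncard : ℝ) * x ^ D) ≤
          (1/2) * ∑ D ∈ Finset.range (M + 1), ({v : Γ | G.dist 1 v = D}.ncard : ℝ) * x ^ D :=
      mul_le_mul_of_nonneg_right hR.le (hSignn M)
    linarith [hSignn M]
  -- final contradiction
  have hdiv : Filter.Tendsto (fun M : ℕ => (lam' / lam) ^ M) Filter.atTop Filter.atTop :=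
    tendsto_pow_atTop_atTop_of_one_lt ((one_lt_div (by linarith)).mpr hlamlam')
  obtain ⟨M, hM1, hM2, hM3⟩ := (hgrow.and ((hdiv.eventually_gt_atTop
      (2 * ∑ D ∈ Finset.range D₁, ({v : Γ | G.dist 1 v = D}.ncard : ℝ) * x ^ D)).and
      (Filter.eventually_ge_atTop D₁))).exists
  have hSig_ge : (lam' / lam) ^ M ≤
      ∑ D ∈ Finset.range (M + 1), ({v : Γ | G.dist 1 v = D}.ncard : ℝ) * x ^ D := by
    have hstep1 : ∑ D ∈ Finset.range (M + 1), ({v : Γ | G.dist 1 v = D}.ncard : ℝ) * x ^ M ≤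
        ∑ D ∈ Finset.range (M + 1), ({v : Γ | G.dist 1 v = D}.ncard : ℝ) * x ^ D := by
      apply Finset.sum_le_sum
      intro D hD
      simp only [Finset.mem_range] at hD
      exact mul_le_mul_of_nonneg_left (pow_le_pow_of_le_one hx0.le hx1.le (by omega))
        (Nat.cast_nonneg _)
    have hbm := sum_sph (S : Set Γ) hballfin M
    rw [← hGdef] at hbm
    have hsum : ∑ D ∈ Finset.range (M + 1), ({v : Γ | G.dist 1 v = D}.ncard : ℝ) * x ^ M =
        ((ball G 1 M).ncard : ℝ) * x ^ M := by
      rw [← Finset.sum_mul]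
      congr 1
      exact_mod_cast hbm
    have hfin : (lam' / lam) ^ M ≤ ((ball G 1 M).ncard : ℝ) * x ^ M := by
      have hpow : (lam' / lam) ^ M = lam' ^ M * x ^ M := by
        rw [hxdef, div_eq_mul_inv, mul_pow]
      rw [hpow]
      exact mul_le_mul_of_nonneg_right hM1 (pow_nonneg hx0.le M)
    calc (lam' / lam) ^ M ≤ ((ball G 1 M).ncard : ℝ) * x ^ M := hfin
      _ = ∑ D ∈ Finset.range (M + 1), ({v : Γ | G.dist 1 v = D}.ncard : ℝ) * x ^ M := hsum.symm
      _ ≤ _ := hstep1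
  have hcontr := hbound M hM3
  linarith
end
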